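/- arXiv:1904.03169 — 4 statements merged into one kernel-verified Lean document; each statement's English description precedes it below -/
import Mathlib

section
/- Let X₁, X₂, … be a strictly stationary and ergodic sequence of real random variables whose common distribution has essential supremum γ = sup{x : P(X₁ ≤ x) < 1} < ∞, and suppose P(X₁ = γ) = 0 and P(X₁ = γ − a) = 0 for a fixed a > 0. Let (kₙ) be a sequence of integers with 1 ≤ kₙ ≤ n and kₙ/n → 1. Then (1/n) Σ_{i=1}^n 1{X_{kₙ:n} − a < X_i < X_{kₙ:n}} converges almost surely to P(X₁ > γ − a) as n → ∞, where X_{kₙ:n} denotes the kₙ-th smallest value among X₁, …, Xₙ. -/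
open MeasureTheory Filter Set
open scoped Topology ENNReal

noncomputable section

/-- The shift map on real sequences. -/
def seqShift (y : ℕ → ℝ) : ℕ → ℝ := fun n => y (n + 1)

/-- The path map associating to each sample point the sequence of observations. -/
def path {Ω : Type*} (X : ℕ → Ω → ℝ) (ω : Ω) : ℕ → ℝ := fun n => X n ω

/-- The `k`-th smallest value (k counted from 1) among `x 0, …, x (n-1)`. -/
def ordStat (k n : ℕ) (x : ℕ → ℝ) : ℝ :=
  ((List.ofFn (fun i : Fin n => x i)).insertionSort (· ≤ ·)).getD (k - 1) 0

/-- Number of observations among `x 0, …, x (n-1)` in the left `a`-neighborhood of the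
`k`-th order statistic. -/
def nearCount (k n : ℕ) (a : ℝ) (x : ℕ → ℝ) : ℕ :=
  ((Finset.range n).filter
    (fun i => ordStat k n x - a < x i ∧ x i < ordStat k n x)).card

/-- Sum of observations among `x 0, …, x (n-1)` in the left `a`-neighborhood of the
`k`-th order statistic. -/
def nearSum (k n : ℕ) (a : ℝ) (x : ℕ → ℝ) : ℝ :=
  ∑ i ∈ Finset.range n,
    if ordStat k n x - a < x i ∧ x i < ordStat k n x then x i else 0

/-- The right endpoint `sup {x : P(X ≤ x) < 1}` of the support of `X`, as an extended real. -/
def rightEndpoint {Ω : Type*} [MeasurableSpace Ω] (μ : Measure Ω) (X : Ω → ℝ) : EReal :=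
  sSup ((fun r : ℝ => (r : EReal)) '' {r : ℝ | μ {ω | X ω ≤ r} < 1})

namespace BirkAux

variable {α : Type*} [MeasurableSpace α] {ν : Measure α} {T : α → α} {f : α → ℝ}

/-- Birkhoff sum. -/
def birkS (f : α → ℝ) (T : α → α) (n : ℕ) (x : α) : ℝ := ∑ j ∈ Finset.range n, f (T^[j] x)

/-- Running max of Birkhoff sums `S 1, …, S (N+1)`. -/
def birkM (f : α → ℝ) (T : α → α) : ℕ → α → ℝ
  | 0 => birkS f T 1
  | (N+1) => fun x => max (birkM f T N x) (birkS f T (N+2) x)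

set_option linter.unusedSectionVars false

lemma birkS_succ (k : ℕ) (x : α) :
    birkS f T (k+1) x = f x + birkS f T k (T x) := by
  rw [birkS, Finset.sum_range_succ']
  simp only [Function.iterate_succ_apply, Function.iterate_zero_apply]
  rw [add_comm]
  rfl

lemma birkS_measurable (hf : Measurable f) (hT : Measurable T) (n : ℕ) :
    Measurable (birkS f T n) :=
  Finset.measurable_sum _ fun j _ => hf.comp (hT.iterate j)

lemma birkM_measurable (hf : Measurable f) (hT : Measurable T) (N : ℕ) :
    Measurable (birkM f T N) := by
  induction N with
  | zero => exact birkS_measurable hf hT 1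
  | succ N ih => exact ih.max (birkS_measurable hf hT (N+2))

lemma birkS_le_birkM {k N : ℕ} (hk : k ≤ N) (x : α) :
    birkS f T (k+1) x ≤ birkM f T N x := by
  induction N with
  | zero =>
    obtain rfl := Nat.le_zero.mp hk
    exact le_of_eq rfl
  | succ N ih =>
    rcases Nat.lt_or_ge k (N+1) with h | h
    · exact le_trans (ih (Nat.lt_succ_iff.mp h)) (le_max_left _ _)
    · have : k = N + 1 := le_antisymm hk h
      subst this
      exact le_max_right _ _

lemma birkM_exists (N : ℕ) (x : α) : ∃ k ≤ N, birkM f T N x = birkS f T (k+1) x := by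
  induction N with
  | zero => exact ⟨0, le_rfl, rfl⟩
  | succ N ih =>
    rcases ih with ⟨k, hk, hke⟩
    rcases le_total (birkS f T (N+2) x) (birkM f T N x) with h | h
    · refine ⟨k, hk.trans (Nat.le_succ N), ?_⟩
      rw [show birkM f T (N+1) x = max (birkM f T N x) (birkS f T (N+2) x) from rfl,
        max_eq_left h, hke]
    · refine ⟨N+1, le_rfl, ?_⟩
      rw [show birkM f T (N+1) x = max (birkM f T N x) (birkS f T (N+2) x) from rfl,
        max_eq_right h]

lemma birkM_key (N : ℕ) (x : α) :
    birkM f T N x ≤ f x + max (birkM f T N (T x)) 0 := by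
  obtain ⟨k, hk, hke⟩ := birkM_exists (f := f) (T := T) N x
  rw [hke, birkS_succ]
  rcases Nat.eq_zero_or_pos k with rfl | hkpos
  · simp [birkS]
  · obtain ⟨j, rfl⟩ := Nat.exists_eq_add_of_lt hkpos
    have : birkS f T (j+1) (T x) ≤ birkM f T N (T x) :=
      birkS_le_birkM (le_trans (Nat.le_of_succ_le (by omega)) le_rfl) _
    have h2 : birkS f T (j+1) (T x) ≤ max (birkM f T N (T x)) 0 :=
      this.trans (le_max_left _ _)
    simpa using add_le_add_left h2 (f x)

lemma birkM_mono (N : ℕ) (x : α) : birkM f T N x ≤ birkM f T (N+1) x := le_max_left _ _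

lemma abs_birkS_le {C : ℝ} (hC : ∀ x, |f x| ≤ C) (n : ℕ) (x : α) :
    |birkS f T n x| ≤ n * C := by
  calc |birkS f T n x| ≤ ∑ j ∈ Finset.range n, |f (T^[j] x)| :=
        Finset.abs_sum_le_sum_abs _ _
    _ ≤ ∑ _j ∈ Finset.range n, C := Finset.sum_le_sum fun j _ => hC _
    _ = n * C := by simp [mul_comm]

lemma abs_birkM_le {C : ℝ} (hC : ∀ x, |f x| ≤ C) (hC0 : 0 ≤ C) (N : ℕ) (x : α) :
    |birkM f T N x| ≤ (N+2) * C := by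
  induction N with
  | zero =>
    have h := abs_birkS_le (T := T) hC 1 x
    simp only [Nat.cast_one, one_mul] at h
    have h2 : birkM f T 0 x = birkS f T 1 x := rfl
    rw [h2]; push_cast; nlinarith
  | succ N ih =>
    have h1 : |birkS f T (N+2) x| ≤ ((N:ℝ)+2) * C := by
      have h := abs_birkS_le (T := T) hC (N+2) x
      push_cast at h; linarith
    have hm : birkM f T (N+1) x = max (birkM f T N x) (birkS f T (N+2) x) := rfl
    rw [hm]
    refine (abs_max_le_max_abs_abs).trans (max_le ?_ ?_)
    · refine ih.trans ?_; push_cast; nlinarith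
    · refine h1.trans ?_; push_cast; nlinarith

lemma integrable_of_bound [IsFiniteMeasure ν] {g : α → ℝ} (hg : Measurable g) {C : ℝ}
    (hC : ∀ x, |g x| ≤ C) : Integrable g ν :=
  (integrable_const C).mono' hg.aestronglyMeasurable
    (Eventually.of_forall fun x => by simpa [Real.norm_eq_abs] using hC x)

lemma maximal [IsProbabilityMeasure ν] (hT : MeasurePreserving T ν ν)
    (hf : Measurable f) {C : ℝ} (hC : ∀ x, |f x| ≤ C) (hC0 : 0 ≤ C) (N : ℕ) :
    0 ≤ ∫ x in {x | 0 < birkM f T N x}, f x ∂ν := by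
  set E := {x | 0 < birkM f T N x} with hE
  have hTm : Measurable T := hT.measurable
  have hMm : Measurable (birkM f T N) := birkM_measurable hf hTm N
  have hEm : MeasurableSet E := measurableSet_lt measurable_const hMm
  set g : α → ℝ := fun x => max (birkM f T N x) 0 with hg
  have hgm : Measurable g := hMm.max measurable_const
  have hgb : ∀ x, |g x| ≤ (N+2)*C := fun x => by
    rw [abs_of_nonneg (le_max_right _ _)]
    exact max_le ((le_abs_self _).trans (abs_birkM_le (T:=T) hC hC0 N x)) (by positivity)
  have fInt : Integrable f ν := integrable_of_bound hf hC
  have gInt : Integrable g ν := integrable_of_bound hgm hgb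
  have hInt : Integrable (fun x => g (T x)) ν :=
    integrable_of_bound (hgm.comp hTm) (fun x => hgb (T x))
  have key : ∀ x ∈ E, g x - g (T x) ≤ f x := by
    intro x hx
    have h1 : g x = birkM f T N x := max_eq_left (le_of_lt hx)
    have h2 := birkM_key (f := f) (T := T) N x
    rw [h1]
    linarith
  have h1 : ∫ x in E, (g x - g (T x)) ∂ν ≤ ∫ x in E, f x ∂ν :=
    setIntegral_mono_on ((gInt.sub hInt).integrableOn) (fInt.integrableOn) hEm key
  have h2 : ∫ x in E, (g x - g (T x)) ∂ν = ∫ x in E, g x ∂ν - ∫ x in E, g (T x) ∂ν :=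
    integral_sub gInt.integrableOn hInt.integrableOn
  have hEc : ∫ x in Eᶜ, g x ∂ν = 0 := by
    rw [setIntegral_congr_fun hEm.compl (g := fun _ => (0:ℝ))
      (fun x hx => max_eq_right (le_of_not_gt hx))]
    simp
  have h3 : ∫ x in E, g x ∂ν = ∫ x, g x ∂ν := by
    have := integral_add_compl hEm gInt
    linarith
  have h4 : ∫ x in E, g (T x) ∂ν ≤ ∫ x, g (T x) ∂ν :=
    setIntegral_le_integral hInt (Eventually.of_forall fun x => le_max_right _ _)
  have h5 : ∫ x, g (T x) ∂ν = ∫ x, g x ∂ν := by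
    conv_rhs => rw [← hT.map_eq]
    rw [integral_map hTm.aemeasurable (hT.map_eq.symm ▸ hgm.aestronglyMeasurable)]
  linarith

/-- Birkhoff average. -/
def birkA (f : α → ℝ) (T : α → α) (n : ℕ) (x : α) : ℝ := birkS f T n x / n

lemma birkA_abs_le {C : ℝ} (hC : ∀ x, |f x| ≤ C) (hC0 : 0 ≤ C) (n : ℕ) (x : α) :
    |birkA f T n x| ≤ C := by
  rcases Nat.eq_zero_or_pos n with rfl | hn
  · simpa [birkA, birkS] using hC0
  · have h := abs_birkS_le (T := T) hC n x
    have hn' : (0:ℝ) < n := by exact_mod_cast hn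
    rw [birkA, abs_div, abs_of_pos hn', div_le_iff₀ hn']
    nlinarith

lemma limsup_le_limsup_of_sub {u v : ℕ → ℝ} {C : ℝ}
    (hu : ∀ n, |u n| ≤ C) (hv : ∀ n, |v n| ≤ C)
    (h : Tendsto (fun n => u n - v n) atTop (𝓝 0)) :
    limsup u atTop ≤ limsup v atTop := by
  have hvb : IsBoundedUnder (· ≤ ·) atTop v :=
    isBoundedUnder_of ⟨C, fun n => (le_abs_self _).trans (hv n)⟩
  have hucb : IsCoboundedUnder (· ≤ ·) atTop u :=
    isCoboundedUnder_le_of_le atTop (x := -C) fun n => neg_le_of_abs_le (hu n)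
  by_contra hlt
  push_neg at hlt
  set ε := (limsup u atTop - limsup v atTop) / 2 with hε
  have hε0 : 0 < ε := by simp only [hε]; linarith
  have h1 : ∀ᶠ n in atTop, v n < limsup v atTop + ε/2 :=
    eventually_lt_of_limsup_lt (by linarith) hvb
  have h2 : ∀ᶠ n in atTop, |u n - v n| < ε/2 := by
    have := Metric.tendsto_nhds.mp h (ε/2) (by linarith)
    simpa [Real.dist_eq] using this
  have h3 : ∀ᶠ n in atTop, u n ≤ limsup v atTop + ε := by
    filter_upwards [h1, h2] with n hn1 hn2
    have := abs_lt.mp hn2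
    linarith
  have := limsup_le_of_le hucb h3
  simp only [hε] at this
  linarith

lemma limsup_eq_limsup_of_sub {u v : ℕ → ℝ} {C : ℝ}
    (hu : ∀ n, |u n| ≤ C) (hv : ∀ n, |v n| ≤ C)
    (h : Tendsto (fun n => u n - v n) atTop (𝓝 0)) :
    limsup u atTop = limsup v atTop :=
  le_antisymm (limsup_le_limsup_of_sub hu hv h)
    (limsup_le_limsup_of_sub hv hu (by simpa using h.neg))

lemma limsup_birkA_comp {C : ℝ} (hC : ∀ x, |f x| ≤ C) (hC0 : 0 ≤ C) (x : α) :
    limsup (fun n => birkA f T n (T x)) atTop = limsup (fun n => birkA f T n x) atTop := by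
  have key : limsup (fun n => birkA f T n (T x)) atTop
      = limsup (fun n => birkA f T (n+1) x) atTop := by
    refine limsup_eq_limsup_of_sub (C := C) (fun n => birkA_abs_le hC hC0 n (T x))
      (fun n => birkA_abs_le hC hC0 (n+1) x) ?_
    have hb : ∀ n : ℕ, |birkA f T n (T x) - birkA f T (n+1) x| ≤ 4*C/(n+1) := by
      intro n
      rcases Nat.eq_zero_or_pos n with rfl | hn
      · have h0 : birkA f T 0 (T x) = 0 := by simp [birkA, birkS]
        have h1 : birkA f T (0+1) x = f x := by simp [birkA, birkS]
        rw [h0, h1, zero_sub, abs_neg]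
        push_cast
        calc |f x| ≤ C := hC x
          _ ≤ 4*C/(0+1) := by linarith
      · have hn' : (1:ℝ) ≤ n := by exact_mod_cast hn
        have hS : birkS f T (n+1) x = f x + birkS f T n (T x) := birkS_succ n x
        have hA : |birkS f T (n+1) x| ≤ (n+1) * C := by
          have := abs_birkS_le (T := T) hC (n+1) x
          push_cast at this; linarith
        have hfx := hC x
        have e1 : birkA f T n (T x) - birkA f T (n+1) x
            = birkS f T (n+1) x * (1/(n:ℝ) - 1/((n:ℝ)+1)) - f x / n := by
          rw [birkA, birkA, hS]
          push_cast
          field_simp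
          ring
        rw [e1]
        have hpos : (0:ℝ) < n := by linarith
        have e2 : (1/(n:ℝ) - 1/((n:ℝ)+1)) = 1/((n:ℝ)*((n:ℝ)+1)) := by
          field_simp
          ring
        calc |birkS f T (n+1) x * (1/(n:ℝ) - 1/((n:ℝ)+1)) - f x / n|
            ≤ |birkS f T (n+1) x * (1/(n:ℝ) - 1/((n:ℝ)+1))| + |f x / n| := abs_sub _ _
          _ = |birkS f T (n+1) x| * (1/((n:ℝ)*((n:ℝ)+1))) + |f x| / n := by
              rw [abs_mul, e2]
              congr 1
              · congr 1
                rw [abs_of_pos (by positivity)]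
              · rw [abs_div, abs_of_pos hpos]
          _ ≤ ((n:ℝ)+1) * C * (1/((n:ℝ)*((n:ℝ)+1))) + C / n := by
              gcongr
          _ = C/n + C/n := by field_simp
          _ ≤ 4*C/((n:ℝ)+1) := by
              rw [← add_div, div_le_div_iff₀ hpos (by positivity)]
              nlinarith
    refine squeeze_zero_norm (fun n => by simpa [Real.norm_eq_abs] using hb n) ?_
    have : Tendsto (fun n : ℕ => (4*C) * (1/((n:ℝ)+1))) atTop (𝓝 ((4*C) * 0)) :=
      tendsto_one_div_add_atTop_nhds_zero_nat.const_mul _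
    simpa [mul_one_div, div_eq_mul_inv] using this
  rw [key]
  exact limsup_nat_add (fun n => birkA f T n x) 1

lemma birkS_sub_const (r : ℝ) (n : ℕ) (x : α) :
    birkS (fun y => f y - r) T n x = birkS f T n x - n * r := by
  simp [birkS, Finset.sum_sub_distrib, mul_comm]

lemma exists_const [IsProbabilityMeasure ν] (herg : Ergodic T ν) (hf : Measurable f)
    {C : ℝ} (hC : ∀ x, |f x| ≤ C) (hC0 : 0 ≤ C) :
    ∃ c : ℝ, |c| ≤ C ∧ (fun x => limsup (fun n => birkA f T n x) atTop) =ᵐ[ν] fun _ => c := by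
  have hTm : Measurable T := herg.toMeasurePreserving.measurable
  have hφm : Measurable (fun x => limsup (fun n => birkA f T n x) atTop) :=
    Measurable.limsup (fun n => (birkS_measurable hf hTm n).div_const _)
  obtain ⟨c, hc⟩ := herg.ae_eq_const_of_ae_eq_comp₀ hφm.nullMeasurable
    (Eventually.of_forall fun x => limsup_birkA_comp hC hC0 x)
  refine ⟨c, ?_, hc⟩
  have hbnd : ∀ x, |limsup (fun n => birkA f T n x) atTop| ≤ C := fun x => by
    rw [abs_le]
    constructor
    · exact le_limsup_of_frequently_le
        (Frequently.of_forall fun n => neg_le_of_abs_le (birkA_abs_le hC hC0 n x))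
        (isBoundedUnder_of ⟨C, fun n => le_of_abs_le (birkA_abs_le hC hC0 n x)⟩)
    · exact limsup_le_of_le
        (isCoboundedUnder_le_of_le atTop (x := -C)
          fun n => neg_le_of_abs_le (birkA_abs_le hC hC0 n x))
        (Eventually.of_forall fun n => le_of_abs_le (birkA_abs_le hC hC0 n x))
  have hne : (ae ν).NeBot := ae_neBot.2 (IsProbabilityMeasure.ne_zero ν)
  obtain ⟨x, hx⟩ := hc.exists
  have hcc : limsup (fun n => birkA f T n x) atTop = c := hx
  rw [← hcc]
  exact hbnd x

lemma const_le_integral [IsProbabilityMeasure ν] (herg : Ergodic T ν) (hf : Measurable f)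
    {C : ℝ} (hC : ∀ x, |f x| ≤ C) (hC0 : 0 ≤ C) {c : ℝ}
    (hc : (fun x => limsup (fun n => birkA f T n x) atTop) =ᵐ[ν] fun _ => c) :
    c ≤ ∫ x, f x ∂ν := by
  have hTm : Measurable T := herg.toMeasurePreserving.measurable
  have fInt : Integrable f ν := integrable_of_bound hf hC
  by_contra hcon
  push_neg at hcon
  set ε := (c - ∫ x, f x ∂ν)/2 with hεdef
  have hε : 0 < ε := by simp only [hεdef]; linarith
  suffices h : c - ε ≤ ∫ x, f x ∂ν by simp only [hεdef] at h; linarith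
  set g : α → ℝ := fun y => f y - (c - ε) with hgdef
  have hgm : Measurable g := hf.sub measurable_const
  set C' : ℝ := C + |c - ε| with hC'def
  have hC' : ∀ x, |g x| ≤ C' := fun x =>
    (abs_sub (f x) (c - ε)).trans (add_le_add_left (hC x) _)
  have hC'0 : 0 ≤ C' := by positivity
  set E : ℕ → Set α := fun N => {x | 0 < birkM g T N x} with hEdef
  have hEm : ∀ N, MeasurableSet (E N) :=
    fun N => measurableSet_lt measurable_const (birkM_measurable hgm hTm N)
  have hEmono : Monotone E :=
    monotone_nat_of_le_succ (fun N x hx => lt_of_lt_of_le hx (birkM_mono N x))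
  have hcover : ∀ᵐ x ∂ν, x ∈ ⋃ N, E N := by
    filter_upwards [hc] with x hx
    have hbb : IsCoboundedUnder (· ≤ ·) atTop (fun n => birkA f T n x) :=
      isCoboundedUnder_le_of_le atTop (x := -C)
        fun n => neg_le_of_abs_le (birkA_abs_le hC hC0 n x)
    have hfreq : ∃ᶠ n in atTop, c - ε < birkA f T n x :=
      frequently_lt_of_lt_limsup hbb (by rw [hx]; linarith)
    obtain ⟨n, hn1, hn2⟩ := (hfreq.and_eventually (eventually_ge_atTop 1)).exists
    have hnpos : (0:ℝ) < n := by exact_mod_cast hn2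
    have hS : 0 < birkS g T n x := by
      rw [hgdef, birkS_sub_const]
      rw [birkA, lt_div_iff₀ hnpos] at hn1
      linarith
    obtain ⟨m, rfl⟩ : ∃ m, n = m + 1 := ⟨n - 1, by omega⟩
    exact mem_iUnion.2 ⟨m, lt_of_lt_of_le hS (birkS_le_birkM le_rfl x)⟩
  have hUm : MeasurableSet (⋃ N, E N) := MeasurableSet.iUnion hEm
  have hU1 : ν (⋃ N, E N) = 1 := by
    refine (prob_compl_eq_zero_iff hUm).mp ?_
    exact ae_iff.mp hcover
  have htend : Tendsto (fun N => ν (E N)) atTop (𝓝 1) := by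
    have h := tendsto_measure_iUnion_atTop (μ := ν) hEmono
    rw [hU1] at h
    exact h
  have htr : Tendsto (fun N => (ν (E N)ᶜ).toReal) atTop (𝓝 0) := by
    have h1 : Tendsto (fun N => (ν (E N)).toReal) atTop (𝓝 1) := by
      have := (ENNReal.tendsto_toReal ENNReal.one_ne_top).comp htend
      exact this
    have heq : ∀ N, (ν (E N)ᶜ).toReal = 1 - (ν (E N)).toReal := fun N => by
      rw [measure_compl (hEm N) (measure_ne_top ν _), measure_univ,
        ENNReal.toReal_sub_of_le prob_le_one ENNReal.one_ne_top]
      simp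
    simp only [heq]
    simpa using ((tendsto_const_nhds (x := (1:ℝ)) (f := atTop)).sub h1)
  have gInt : Integrable g ν := integrable_of_bound hgm hC'
  have hineq : ∀ N, -(C' * (ν (E N)ᶜ).toReal) ≤ ∫ x, g x ∂ν := by
    intro N
    have h0 : 0 ≤ ∫ x in E N, g x ∂ν := maximal herg.toMeasurePreserving hgm hC' hC'0 N
    have h1 : |∫ x in (E N)ᶜ, g x ∂ν| ≤ C' * (ν (E N)ᶜ).toReal := by
      have := norm_setIntegral_le_of_norm_le_const (μ := ν) (s := (E N)ᶜ) (f := g)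
        (measure_lt_top ν _)
        (fun x _ => by simpa [Real.norm_eq_abs] using hC' x)
      simpa [Real.norm_eq_abs, measureReal_def] using this
    have h2 : ∫ x in E N, g x ∂ν + ∫ x in (E N)ᶜ, g x ∂ν = ∫ x, g x ∂ν :=
      integral_add_compl (hEm N) gInt
    have h3 := abs_le.mp h1
    linarith [h3.1, h3.2]
  have hge : 0 ≤ ∫ x, g x ∂ν := by
    have ht2 : Tendsto (fun N => -(C' * (ν (E N)ᶜ).toReal)) atTop (𝓝 (0:ℝ)) := by
      have := (htr.const_mul C').neg
      simpa using this
    exact le_of_tendsto ht2 (Eventually.of_forall hineq)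
  have hgi : ∫ x, g x ∂ν = (∫ x, f x ∂ν) - (c - ε) := by
    rw [hgdef]
    rw [integral_sub fInt (integrable_const _), integral_const]
    simp
  linarith

theorem birkhoff_ergodic [IsProbabilityMeasure ν] (herg : Ergodic T ν) (hf : Measurable f)
    {C : ℝ} (hC : ∀ x, |f x| ≤ C) (hC0 : 0 ≤ C) :
    ∀ᵐ x ∂ν, Tendsto (fun n => birkA f T n x) atTop (𝓝 (∫ x, f x ∂ν)) := by
  obtain ⟨c, _, hc⟩ := exists_const herg hf hC hC0
  have hnegC : ∀ x, |(fun y => -f y) x| ≤ C := fun x => by simpa using hC x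
  obtain ⟨c', _, hc'⟩ := exists_const (f := fun y => -f y) herg hf.neg hnegC hC0
  have h1 : c ≤ ∫ x, f x ∂ν := const_le_integral herg hf hC hC0 hc
  have h2 : c' ≤ -∫ x, f x ∂ν := by
    have := const_le_integral (f := fun y => -f y) herg hf.neg hnegC hC0 hc'
    rwa [integral_neg] at this
  have hAneg : ∀ n x, birkA (fun y => -f y) T n x = - birkA f T n x := fun n x => by
    simp [birkA, birkS, neg_div, Finset.sum_neg_distrib]
  filter_upwards [hc, hc'] with x hx hx'
  simp only [hAneg] at hx'
  rw [Metric.tendsto_atTop]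
  intro δ hδ
  have hb1 : IsBoundedUnder (· ≤ ·) atTop (fun n => birkA f T n x) :=
    isBoundedUnder_of ⟨C, fun n => le_of_abs_le (birkA_abs_le hC hC0 n x)⟩
  have hb2 : IsBoundedUnder (· ≤ ·) atTop (fun n => -birkA f T n x) :=
    isBoundedUnder_of ⟨C, fun n => (neg_le_abs _).trans (birkA_abs_le hC hC0 n x)⟩
  have e1 : ∀ᶠ n in atTop, birkA f T n x < (∫ x, f x ∂ν) + δ :=
    eventually_lt_of_limsup_lt (by rw [hx]; linarith) hb1
  have e2 : ∀ᶠ n in atTop, -birkA f T n x < -(∫ x, f x ∂ν) + δ :=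
    eventually_lt_of_limsup_lt (by rw [hx']; linarith) hb2
  obtain ⟨N, hN⟩ := eventually_atTop.mp (e1.and e2)
  refine ⟨N, fun n hn => ?_⟩
  obtain ⟨ha, hb⟩ := hN n hn
  rw [Real.dist_eq, abs_lt]
  constructor <;> linarith

end BirkAux
section MainAux
open BirkAux


lemma seqShift_measurable : Measurable seqShift :=
  measurable_pi_lambda _ fun n => measurable_pi_apply (n + 1)

lemma path_measurable {Ω : Type*} [MeasurableSpace Ω] {X : ℕ → Ω → ℝ}
    (hX : ∀ n, Measurable (X n)) : Measurable (path X) :=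
  measurable_pi_lambda _ fun n => hX n

lemma seqShift_iterate (y : ℕ → ℝ) (j m : ℕ) : seqShift^[j] y m = y (m + j) := by
  induction j generalizing y m with
  | zero => rfl
  | succ j ih =>
    rw [Function.iterate_succ_apply, ih]
    simp [seqShift]
    ring_nf

lemma ordStat_mem {k n : ℕ} (hk1 : 1 ≤ k) (hkn : k ≤ n) (x : ℕ → ℝ) :
    ∃ i < n, ordStat k n x = x i := by
  set l := (List.ofFn (fun i : Fin n => x i)).insertionSort (· ≤ ·) with hl
  have hlen : l.length = n := by rw [hl, List.length_insertionSort, List.length_ofFn]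
  have hidx : k - 1 < l.length := by omega
  have hmem : l.getD (k-1) 0 ∈ l := by
    rw [List.getD_eq_getElem l 0 hidx]
    exact List.getElem_mem hidx
  have h2 : l.getD (k-1) 0 ∈ List.ofFn (fun i : Fin n => x i) :=
    ((List.perm_insertionSort _ _).mem_iff).1 hmem
  obtain ⟨i, hi⟩ := (List.mem_ofFn).1 h2
  exact ⟨i, i.isLt, hi.symm⟩

lemma countP_ofFn {n : ℕ} (g : Fin n → ℝ) (t : ℝ) :
    (List.ofFn g).countP (fun b => decide (b ≤ t))
      = (Finset.univ.filter (fun i => g i ≤ t)).card := by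
  induction n with
  | zero => simp
  | succ n ih =>
    rw [List.ofFn_succ, List.countP_cons, ih (fun i => g i.succ),
      Finset.card_filter, Finset.card_filter, Fin.sum_univ_succ]
    by_cases h : g 0 ≤ t <;> simp [h, add_comm]

lemma le_card_of_ordStat_le {k n : ℕ} (hk1 : 1 ≤ k) (hkn : k ≤ n) (x : ℕ → ℝ) {t : ℝ}
    (h : ordStat k n x ≤ t) :
    k ≤ ((Finset.range n).filter (fun i => x i ≤ t)).card := by
  classical
  set l := (List.ofFn (fun i : Fin n => x i)).insertionSort (· ≤ ·) with hl
  have hlen : l.length = n := by rw [hl, List.length_insertionSort, List.length_ofFn]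
  have hsort : l.Pairwise (· ≤ ·) := List.pairwise_insertionSort _ _
  have hidx : k - 1 < l.length := by omega
  have hgetD : ordStat k n x = l[k-1]'hidx := List.getD_eq_getElem l 0 hidx
  have htake : ∀ a ∈ l.take k, a ≤ t := by
    intro a ha
    obtain ⟨i, hi, rfl⟩ := List.mem_iff_getElem.1 ha
    have hik : i < k := lt_of_lt_of_le hi (by rw [List.length_take]; omega)
    rw [List.getElem_take]
    have hile : i ≤ k - 1 := by omega
    have hrel := hsort.rel_get_of_le (a := ⟨i, by omega⟩) (b := ⟨k-1, hidx⟩)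
      (Fin.mk_le_mk.2 hile)
    simp only [List.get_eq_getElem] at hrel
    exact hrel.trans (hgetD ▸ h)
  have hcount1 : (l.take k).countP (fun b => decide (b ≤ t)) = k := by
    rw [List.countP_eq_length.2 (fun a ha => decide_eq_true (htake a ha)),
      List.length_take]
    omega
  have hcount2 : k ≤ l.countP (fun b => decide (b ≤ t)) :=
    hcount1 ▸ (List.take_sublist k l).countP_le (p := fun b => decide (b ≤ t))
  have hcount3 : l.countP (fun b => decide (b ≤ t))
      = (Finset.univ.filter (fun i : Fin n => x i ≤ t)).card := by
    rw [(List.perm_insertionSort _ _).countP_eq, countP_ofFn]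
  have hbridge : (Finset.univ.filter (fun i : Fin n => x i ≤ t)).card
      = ((Finset.range n).filter (fun i => x i ≤ t)).card := by
    rw [Finset.card_filter, Finset.card_filter,
      Finset.sum_range (fun i => if x i ≤ t then 1 else 0)]
  omega

lemma ordStat_gt {k n : ℕ} (hk1 : 1 ≤ k) (hkn : k ≤ n) (x : ℕ → ℝ) {t : ℝ}
    (h : ((Finset.range n).filter (fun i => x i ≤ t)).card < k) :
    t < ordStat k n x := by
  by_contra hc
  push_neg at hc
  exact absurd (le_card_of_ordStat_le hk1 hkn x hc) (by omega)


variable {Ω : Type*} [MeasurableSpace Ω] {μ : Measure Ω} [IsProbabilityMeasure μ]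
variable {X : ℕ → Ω → ℝ}

lemma empirical (hX : ∀ n, Measurable (X n))
    (herg : Ergodic seqShift (Measure.map (path X) μ))
    {s : Set ℝ} (hs : MeasurableSet s) [DecidablePred (· ∈ s)] :
    ∀ᵐ ω ∂μ, Tendsto (fun n : ℕ => (((Finset.range n).filter (fun i => X i ω ∈ s)).card : ℝ) / n)
      atTop (𝓝 ((μ {ω' | X 0 ω' ∈ s}).toReal)) := by
  set ν := Measure.map (path X) μ with hν
  have hpm : Measurable (path X) := path_measurable hX
  haveI : IsProbabilityMeasure ν := Measure.isProbabilityMeasure_map hpm.aemeasurable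
  set A : Set (ℕ → ℝ) := {y | y 0 ∈ s} with hA
  have hAm : MeasurableSet A := measurable_pi_apply 0 hs
  set f : (ℕ → ℝ) → ℝ := A.indicator (fun _ => 1) with hf
  have hfm : Measurable f := measurable_const.indicator hAm
  have hbd : ∀ y, |f y| ≤ 1 := fun y => by
    by_cases h : y ∈ A <;> simp [hf, Set.indicator_of_mem, Set.indicator_of_notMem, h]
  have hint : ∫ y, f y ∂ν = (μ {ω' | X 0 ω' ∈ s}).toReal := by
    rw [hf, integral_indicator_const _ hAm, smul_eq_mul, mul_one]
    congr 1
    rw [hν, measureReal_def, Measure.map_apply hpm hAm]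
    rfl
  have hb := birkhoff_ergodic herg hfm hbd zero_le_one
  rw [hint] at hb
  have hb2 := ae_of_ae_map hpm.aemeasurable hb
  filter_upwards [hb2] with ω hω
  have hcount : ∀ n, birkS f seqShift n (path X ω)
      = (((Finset.range n).filter (fun i => X i ω ∈ s)).card : ℝ) := by
    intro n
    rw [birkS]
    have hterm : ∀ j, f (seqShift^[j] (path X ω)) = if X j ω ∈ s then (1:ℝ) else 0 := by
      intro j
      have hj : (seqShift^[j] (path X ω)) 0 = X j ω := by
        rw [seqShift_iterate]
        simp [path]
      rw [hf, Set.indicator_apply]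
      simp only [hA, Set.mem_setOf_eq, hj]
    simp only [hterm]
    rw [Finset.sum_boole]
  have heq : (fun n : ℕ => (((Finset.range n).filter (fun i => X i ω ∈ s)).card : ℝ) / n)
      = fun n => birkA f seqShift n (path X ω) := by
    funext n
    rw [birkA, hcount]
  rw [heq]
  exact hω

lemma coord_eq (hX : ∀ n, Measurable (X n))
    (herg : Ergodic seqShift (Measure.map (path X) μ))
    {s : Set ℝ} (hs : MeasurableSet s) (i : ℕ) :
    μ {ω | X i ω ∈ s} = μ {ω | X 0 ω ∈ s} := by
  set ν := Measure.map (path X) μ with hν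
  have hpm : Measurable (path X) := path_measurable hX
  have hAm : MeasurableSet {y : ℕ → ℝ | y 0 ∈ s} := measurable_pi_apply 0 hs
  have h1 : {y : ℕ → ℝ | y i ∈ s} = seqShift^[i] ⁻¹' {y | y 0 ∈ s} := by
    ext y
    simp [seqShift_iterate]
  have h2 : ν {y : ℕ → ℝ | y i ∈ s} = ν {y | y 0 ∈ s} := by
    rw [h1]
    exact (herg.toMeasurePreserving.iterate i).measure_preimage hAm.nullMeasurableSet
  have h3 : ∀ j, μ {ω | X j ω ∈ s} = ν {y : ℕ → ℝ | y j ∈ s} := fun j => by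
    have hm : MeasurableSet {y : ℕ → ℝ | y j ∈ s} := measurable_pi_apply j hs
    rw [hν, Measure.map_apply hpm hm]
    rfl
  rw [h3 i, h3 0, h2]

end MainAux


lemma deterministic (x : ℕ → ℝ) (γ a p : ℝ) (ha : 0 < a)
    (k : ℕ → ℕ) (hk : ∀ n, 1 ≤ n → 1 ≤ k n ∧ k n ≤ n)
    (hk1 : Tendsto (fun n => (k n : ℝ) / n) atTop (𝓝 1))
    (hle : ∀ i, x i ≤ γ)
    (F L U : ℕ → ℝ)
    (hF : ∀ m, F m < 1)
    (hFc : ∀ m : ℕ, Tendsto (fun n : ℕ =>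
      (((Finset.range n).filter (fun i => x i ≤ γ - 1/((m:ℝ)+1))).card : ℝ)/n) atTop (𝓝 (F m)))
    (hLc : ∀ m : ℕ, Tendsto (fun n : ℕ =>
      (((Finset.range n).filter
        (fun i => γ - a < x i ∧ x i < γ - 1/((m:ℝ)+1))).card : ℝ)/n) atTop (𝓝 (L m)))
    (hUc : ∀ m : ℕ, Tendsto (fun n : ℕ =>
      (((Finset.range n).filter
        (fun i => γ - a - 1/((m:ℝ)+1) < x i ∧ x i ≤ γ)).card : ℝ)/n) atTop (𝓝 (U m)))
    (hLp : Tendsto L atTop (𝓝 p)) (hUp : Tendsto U atTop (𝓝 p)) :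
    Tendsto (fun n : ℕ => (nearCount (k n) n a x : ℝ) / n) atTop (𝓝 p) := by
  have hbn : ∀ m : ℕ, ∀ᶠ n in atTop,
      γ - 1/((m:ℝ)+1) < ordStat (k n) n x ∧ ordStat (k n) n x ≤ γ := by
    intro m
    set δ := (1 - F m)/3 with hδ
    have hδ0 : 0 < δ := by simp only [hδ]; linarith [hF m]
    have ev1 : ∀ᶠ n in atTop,
        (((Finset.range n).filter (fun i => x i ≤ γ - 1/((m:ℝ)+1))).card : ℝ)/n < F m + δ :=
      (tendsto_order.1 (hFc m)).2 _ (by linarith)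
    have ev2 : ∀ᶠ n in atTop, 1 - δ < (k n : ℝ)/n :=
      (tendsto_order.1 hk1).1 _ (by linarith)
    filter_upwards [ev1, ev2, eventually_ge_atTop 1] with n h1 h2 h3
    obtain ⟨hka, hkb⟩ := hk n h3
    have hn0 : (0:ℝ) < n := by exact_mod_cast h3
    have h4 : (((Finset.range n).filter (fun i => x i ≤ γ - 1/((m:ℝ)+1))).card : ℝ)/n
        < (k n : ℝ)/n := by linarith
    have h5 : (((Finset.range n).filter (fun i => x i ≤ γ - 1/((m:ℝ)+1))).card : ℝ)
        < (k n : ℝ) := by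
      have h6 := mul_lt_mul_of_pos_right h4 hn0
      rwa [div_mul_cancel₀ _ (ne_of_gt hn0), div_mul_cancel₀ _ (ne_of_gt hn0)] at h6
    constructor
    · exact ordStat_gt hka hkb x (by exact_mod_cast h5)
    · obtain ⟨i, _, hi⟩ := ordStat_mem hka hkb x
      rw [hi]
      exact hle i
  rw [tendsto_order]
  constructor
  · intro l hl
    have hev : ∀ᶠ m in atTop, l < L m := (tendsto_order.1 hLp).1 l hl
    obtain ⟨m, hm1, hm2⟩ := (hev.and
      ((tendsto_order.1 tendsto_one_div_add_atTop_nhds_zero_nat).2 a ha)).exists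
    have ev3 : ∀ᶠ n in atTop, l < (((Finset.range n).filter
        (fun i => γ - a < x i ∧ x i < γ - 1/((m:ℝ)+1))).card : ℝ)/n :=
      (tendsto_order.1 (hLc m)).1 l hm1
    filter_upwards [hbn m, ev3, eventually_ge_atTop 1] with n hb hl2 h3
    have hn0 : (0:ℝ) ≤ n := Nat.cast_nonneg n
    refine lt_of_lt_of_le hl2 ?_
    have hsub : (Finset.range n).filter (fun i => γ - a < x i ∧ x i < γ - 1/((m:ℝ)+1))
        ⊆ (Finset.range n).filter
          (fun i => ordStat (k n) n x - a < x i ∧ x i < ordStat (k n) n x) := by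
      intro i hi
      simp only [Finset.mem_filter, Finset.mem_range] at hi ⊢
      obtain ⟨hir, hc1, hc2⟩ := hi
      exact ⟨hir, by linarith [hb.2], by linarith [hb.1]⟩
    have hcard := Finset.card_le_card hsub
    have hnc : (nearCount (k n) n a x : ℝ) = (((Finset.range n).filter
        (fun i => ordStat (k n) n x - a < x i ∧ x i < ordStat (k n) n x)).card : ℝ) := rfl
    rw [hnc]
    gcongr

  · intro u hu
    have hev : ∀ᶠ m in atTop, U m < u := (tendsto_order.1 hUp).2 u hu
    obtain ⟨m, hm1, hm2⟩ := (hev.and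
      ((tendsto_order.1 tendsto_one_div_add_atTop_nhds_zero_nat).2 a ha)).exists
    have ev3 : ∀ᶠ n in atTop, (((Finset.range n).filter
        (fun i => γ - a - 1/((m:ℝ)+1) < x i ∧ x i ≤ γ)).card : ℝ)/n < u :=
      (tendsto_order.1 (hUc m)).2 u hm1
    filter_upwards [hbn m, ev3, eventually_ge_atTop 1] with n hb hu2 h3
    have hn0 : (0:ℝ) ≤ n := Nat.cast_nonneg n
    refine lt_of_le_of_lt ?_ hu2
    have hsub : (Finset.range n).filter
          (fun i => ordStat (k n) n x - a < x i ∧ x i < ordStat (k n) n x)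
        ⊆ (Finset.range n).filter (fun i => γ - a - 1/((m:ℝ)+1) < x i ∧ x i ≤ γ) := by
      intro i hi
      simp only [Finset.mem_filter, Finset.mem_range] at hi ⊢
      obtain ⟨hir, hc1, hc2⟩ := hi
      exact ⟨hir, by linarith [hb.1], hle i⟩
    have hcard := Finset.card_le_card hsub
    have hnc : (nearCount (k n) n a x : ℝ) = (((Finset.range n).filter
        (fun i => ordStat (k n) n x - a < x i ∧ x i < ordStat (k n) n x)).card : ℝ) := rfl
    rw [hnc]
    gcongr



theorem stmt5 {Ω : Type*} [MeasurableSpace Ω] (μ : Measure Ω) [IsProbabilityMeasure μ]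
    (X : ℕ → Ω → ℝ) (hX : ∀ n, Measurable (X n))
    (herg : Ergodic seqShift (Measure.map (path X) μ))
    (γ : ℝ) (hγ : rightEndpoint μ (X 0) = (γ : EReal))
    (a : ℝ) (ha : 0 < a)
    (h1 : μ {ω | X 0 ω = γ} = 0) (h2 : μ {ω | X 0 ω = γ - a} = 0)
    (k : ℕ → ℕ) (hk : ∀ n, 1 ≤ n → 1 ≤ k n ∧ k n ≤ n)
    (hk1 : Tendsto (fun n => (k n : ℝ) / n) atTop (𝓝 1)) :
    ∀ᵐ ω ∂μ, Tendsto (fun n => (nearCount (k n) n a (path X ω) : ℝ) / n) atTop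
      (𝓝 ((μ {ω' | γ - a < X 0 ω'}).toReal)) := by
  have hpm : Measurable (path X) := path_measurable hX
  have hXm : Measurable (X 0) := hX 0
  have hlt : ∀ ε : ℝ, 0 < ε → μ {ω | X 0 ω ≤ γ - ε} < 1 := by
    intro ε hε
    by_contra hcon
    push_neg at hcon
    have hub : rightEndpoint μ (X 0) ≤ ((γ - ε : ℝ) : EReal) := by
      refine sSup_le ?_
      rintro _ ⟨r, hr, rfl⟩
      simp only [mem_setOf_eq] at hr
      rw [EReal.coe_le_coe_iff]
      by_contra hr2
      push_neg at hr2
      exact absurd hr (not_lt.2 (le_trans hcon (measure_mono fun ω h => le_trans h hr2.le)))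
    rw [hγ, EReal.coe_le_coe_iff] at hub
    linarith
  have hone : ∀ r : ℝ, γ < r → μ {ω | X 0 ω ≤ r} = 1 := by
    intro r hr
    by_contra hc
    have hrR : μ {ω | X 0 ω ≤ r} < 1 := lt_of_le_of_ne prob_le_one hc
    have hle2 : ((r : ℝ) : EReal) ≤ rightEndpoint μ (X 0) := le_sSup ⟨r, hrR, rfl⟩
    rw [hγ, EReal.coe_le_coe_iff] at hle2
    linarith
  have hgt0 : μ {ω | γ < X 0 ω} = 0 := by
    have hsub : {ω | γ < X 0 ω} ⊆ ⋃ m : ℕ, {ω | X 0 ω ≤ γ + 1/((m:ℝ)+1)}ᶜ := by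
      intro ω hω
      simp only [mem_setOf_eq] at hω
      obtain ⟨m, hm⟩ := exists_nat_one_div_lt (K := ℝ) (sub_pos.2 hω)
      refine mem_iUnion.2 ⟨m, ?_⟩
      simp only [mem_compl_iff, mem_setOf_eq, not_le]
      linarith
    refine measure_mono_null hsub (measure_iUnion_null fun m => ?_)
    have hmeas : MeasurableSet {ω | X 0 ω ≤ γ + 1/((m:ℝ)+1)} := hXm measurableSet_Iic
    exact (prob_compl_eq_zero_iff hmeas).2
      (hone _ (lt_add_of_pos_right γ (by positivity)))
  have haele : ∀ᵐ ω ∂μ, X 0 ω ≤ γ := by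
    rw [ae_iff]
    convert hgt0 using 2
    ext ω
    simp [not_le]
  have haene : ∀ᵐ ω ∂μ, X 0 ω ≠ γ := by
    rw [ae_iff]
    convert h1 using 2
    ext ω
    simp
  have haenea : ∀ᵐ ω ∂μ, X 0 ω ≠ γ - a := by
    rw [ae_iff]
    convert h2 using 2
    ext ω
    simp
  have hallle : ∀ᵐ ω ∂μ, ∀ i, path X ω i ≤ γ := by
    rw [ae_all_iff]
    intro i
    have hco := coord_eq hX herg (s := Ioi γ) measurableSet_Ioi i
    rw [ae_iff]
    have hset : {ω | ¬ path X ω i ≤ γ} = {ω | X i ω ∈ Ioi γ} := by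
      ext ω
      simp [path, not_le, Set.mem_Ioi]
    rw [hset, hco]
    convert hgt0 using 2
    rfl
  set p := (μ {ω' | γ - a < X 0 ω'}).toReal with hpdef
  set F : ℕ → ℝ := fun m => (μ {ω' | X 0 ω' ∈ Iic (γ - 1/((m:ℝ)+1))}).toReal with hFdef
  set L : ℕ → ℝ := fun m => (μ {ω' | X 0 ω' ∈ Ioo (γ-a) (γ - 1/((m:ℝ)+1))}).toReal with hLdef
  set U : ℕ → ℝ := fun m => (μ {ω' | X 0 ω' ∈ Ioc (γ-a-1/((m:ℝ)+1)) γ}).toReal with hUdef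
  have hF : ∀ m, F m < 1 := by
    intro m
    have h := hlt (1/((m:ℝ)+1)) (by positivity)
    have h2' : F m < (1:ℝ≥0∞).toReal :=
      (ENNReal.toReal_lt_toReal (measure_ne_top μ _) ENNReal.one_ne_top).2 h
    simpa using h2'
  have hFae : ∀ᵐ ω ∂μ, ∀ m : ℕ, Tendsto (fun n : ℕ => (((Finset.range n).filter
      (fun i => X i ω ∈ Iic (γ - 1/((m:ℝ)+1)))).card : ℝ)/n) atTop (𝓝 (F m)) :=
    ae_all_iff.2 fun m => empirical hX herg measurableSet_Iic
  have hLae : ∀ᵐ ω ∂μ, ∀ m : ℕ, Tendsto (fun n : ℕ => (((Finset.range n).filter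
      (fun i => X i ω ∈ Ioo (γ-a) (γ - 1/((m:ℝ)+1)))).card : ℝ)/n) atTop (𝓝 (L m)) :=
    ae_all_iff.2 fun m => empirical hX herg measurableSet_Ioo
  have hUae : ∀ᵐ ω ∂μ, ∀ m : ℕ, Tendsto (fun n : ℕ => (((Finset.range n).filter
      (fun i => X i ω ∈ Ioc (γ-a-1/((m:ℝ)+1)) γ)).card : ℝ)/n) atTop (𝓝 (U m)) :=
    ae_all_iff.2 fun m => empirical hX herg measurableSet_Ioc
  have hdiv : ∀ m m' : ℕ, m ≤ m' → 1/((m':ℝ)+1) ≤ 1/((m:ℝ)+1) := by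
    intro m m' hmm'
    have hc : ((m:ℝ)+1) ≤ ((m':ℝ)+1) := by
      have : (m:ℝ) ≤ m' := Nat.cast_le.2 hmm'
      linarith
    exact one_div_le_one_div_of_le (by positivity) hc
  have hLp : Tendsto L atTop (𝓝 p) := by
    have hmono : Monotone (fun m : ℕ => {ω' | X 0 ω' ∈ Ioo (γ-a) (γ - 1/((m:ℝ)+1))}) := by
      intro m m' hmm' ω hω
      simp only [mem_setOf_eq, mem_Ioo] at hω ⊢
      have := hdiv m m' hmm'
      exact ⟨hω.1, lt_of_lt_of_le hω.2 (by linarith)⟩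
    have htend := tendsto_measure_iUnion_atTop (μ := μ) hmono
    have hunion : (⋃ m : ℕ, {ω' | X 0 ω' ∈ Ioo (γ-a) (γ - 1/((m:ℝ)+1))})
        = {ω' | γ - a < X 0 ω' ∧ X 0 ω' < γ} := by
      ext ω
      simp only [mem_iUnion, mem_setOf_eq, mem_Ioo]
      constructor
      · rintro ⟨m, hm1, hm2⟩
        have : (0:ℝ) < 1/((m:ℝ)+1) := by positivity
        exact ⟨hm1, by linarith⟩
      · rintro ⟨hg1, hg2⟩
        obtain ⟨m, hm⟩ := exists_nat_one_div_lt (sub_pos.2 hg2)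
        exact ⟨m, hg1, by linarith⟩
    rw [hunion] at htend
    have hmeq : μ {ω' | γ - a < X 0 ω' ∧ X 0 ω' < γ} = μ {ω' | γ - a < X 0 ω'} := by
      apply measure_congr
      rw [eventuallyEq_set]
      filter_upwards [haele, haene] with ω hω1 hω2
      exact ⟨fun h => h.1, fun h => ⟨h, lt_of_le_of_ne hω1 hω2⟩⟩
    rw [hmeq] at htend
    exact (ENNReal.tendsto_toReal (measure_ne_top μ _)).comp htend
  have hUp : Tendsto U atTop (𝓝 p) := by
    have hanti : Antitone (fun m : ℕ => {ω' | X 0 ω' ∈ Ioc (γ-a-1/((m:ℝ)+1)) γ}) := by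
      intro m m' hmm' ω hω
      simp only [mem_setOf_eq, mem_Ioc] at hω ⊢
      have := hdiv m m' hmm'
      exact ⟨by linarith [hω.1], hω.2⟩
    have hms : ∀ m : ℕ, NullMeasurableSet {ω' | X 0 ω' ∈ Ioc (γ-a-1/((m:ℝ)+1)) γ} μ :=
      fun m => (hXm measurableSet_Ioc).nullMeasurableSet
    have htend := tendsto_measure_iInter_atTop hms hanti ⟨0, measure_ne_top μ _⟩
    have hinter : (⋂ m : ℕ, {ω' | X 0 ω' ∈ Ioc (γ-a-1/((m:ℝ)+1)) γ})
        = {ω' | γ - a ≤ X 0 ω' ∧ X 0 ω' ≤ γ} := by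
      ext ω
      simp only [mem_iInter, mem_setOf_eq, mem_Ioc]
      constructor
      · intro h
        refine ⟨?_, (h 0).2⟩
        by_contra hc
        push_neg at hc
        obtain ⟨m, hm⟩ := exists_nat_one_div_lt (sub_pos.2 hc)
        linarith [(h m).1]
      · intro h m
        have : (0:ℝ) < 1/((m:ℝ)+1) := by positivity
        exact ⟨by linarith [h.1], h.2⟩
    rw [hinter] at htend
    have hmeq : μ {ω' | γ - a ≤ X 0 ω' ∧ X 0 ω' ≤ γ} = μ {ω' | γ - a < X 0 ω'} := by
      apply measure_congr
      rw [eventuallyEq_set]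
      filter_upwards [haele, haenea] with ω hω1 hω2
      exact ⟨fun h => lt_of_le_of_ne h.1 (Ne.symm hω2), fun h => ⟨le_of_lt h, hω1⟩⟩
    rw [hmeq] at htend
    exact (ENNReal.tendsto_toReal (measure_ne_top μ _)).comp htend
  filter_upwards [hallle, hFae, hLae, hUae] with ω hw1 hw2 hw3 hw4
  exact deterministic (path X ω) γ a p ha k hk hk1 hw1 F L U hF hw2 hw3 hw4 hLp hUp
end
end

section
/- Let X₁, X₂, … be a strictly stationary and ergodic sequence of real random variables whose common distribution is not bounded above (i.e., sup{x : P(X₁ ≤ x) < 1} = ∞), let a > 0, and let (kₙ) be integers with 1 ≤ kₙ ≤ n and kₙ/n → 1. Then (1/n) Σ_{i=1}^n 1{X_{kₙ:n} − a < X_i < X_{kₙ:n}} converges to 0 almost surely as n → ∞. -/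
open MeasureTheory Filter Set
open scoped Topology ENNReal

noncomputable section

variable (x : ℕ → ℝ) (n k : ℕ)

lemma countP_eq_summ (P : ℝ → Prop) [DecidablePred P] (l : List ℝ) :
    l.countP (fun a => decide (P a)) = (l.map (fun a => if P a then 1 else 0)).sum := by
  induction l with
  | nil => simp
  | cons a t ih => by_cases h : P a <;> simp [List.countP_cons, h, ih, Nat.add_comm]

lemma card_filter_eq_countP (P : ℝ → Prop) [DecidablePred P] :
    ((Finset.range n).filter (fun i => P (x i))).card
      = ((List.ofFn (fun i : Fin n => x i)).insertionSort (· ≤ ·)).countP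
          (fun a => decide (P a)) := by
  rw [(List.perm_insertionSort (· ≤ ·) _).countP_eq, countP_eq_summ, List.map_ofFn,
    List.sum_ofFn, Finset.card_filter, Finset.sum_range]
  rfl

lemma l_len : ((List.ofFn (fun i : Fin n => x i)).insertionSort (· ≤ ·)).length = n := by
  rw [List.length_insertionSort, List.length_ofFn]

lemma count_lt_ordStat (hk1 : 1 ≤ k) (hkn : k ≤ n) :
    ((Finset.range n).filter (fun i => x i < ordStat k n x)).card ≤ k - 1 := by
  classical
  set L := (List.ofFn (fun i : Fin n => x i)).insertionSort (· ≤ ·) with hL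
  have hlen : L.length = n := l_len x n
  have hsort : L.Pairwise (· ≤ ·) := List.pairwise_insertionSort _ _
  have hklen : k - 1 < L.length := by omega
  have hs : ordStat k n x = L[k-1] := by
    rw [ordStat, ← hL, List.getD_eq_getElem L 0 hklen]
  rw [card_filter_eq_countP x n (fun b => b < ordStat k n x), ← hL]
  calc L.countP (fun a => decide (a < ordStat k n x))
      = (L.take (k-1)).countP (fun a => decide (a < ordStat k n x))
        + (L.drop (k-1)).countP (fun a => decide (a < ordStat k n x)) := by
        rw [← List.countP_append, List.take_append_drop]
    _ ≤ (k - 1) + 0 := by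
        gcongr
        · calc (L.take (k-1)).countP _ ≤ (L.take (k-1)).length :=
              List.countP_le_length
            _ ≤ k - 1 := by rw [List.length_take]; omega
        · rw [Nat.le_zero, List.countP_eq_zero]
          intro b hb
          rw [List.mem_iff_getElem] at hb
          obtain ⟨j, hj, hbj⟩ := hb
          have hlt : k - 1 + j < L.length := by rw [List.length_drop] at hj; omega
          have hbj' : b = L[k-1+j]'hlt := by rw [← hbj]; exact List.getElem_drop ..
          rw [hbj']
          simp only [decide_eq_true_eq, not_lt, hs]
          exact hsort.rel_get_of_le (a := ⟨k-1, hklen⟩) (b := ⟨k-1+j, hlt⟩) (by simp)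
    _ = k - 1 := by omega

lemma lt_ordStat_of_count_lt (hk1 : 1 ≤ k) (hkn : k ≤ n) (M : ℝ)
    (h : ((Finset.range n).filter (fun i => x i ≤ M)).card < k) : M < ordStat k n x := by
  classical
  by_contra hcon
  push_neg at hcon
  set L := (List.ofFn (fun i : Fin n => x i)).insertionSort (· ≤ ·) with hL
  have hlen : L.length = n := l_len x n
  have hsort : L.Pairwise (· ≤ ·) := List.pairwise_insertionSort _ _
  have hklen : k - 1 < L.length := by omega
  have hs : ordStat k n x = L[k-1] := by
    rw [ordStat, ← hL, List.getD_eq_getElem L 0 hklen]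
  have hcard : ((Finset.range n).filter (fun i => x i ≤ M)).card
      = L.countP (fun a => decide (a ≤ M)) := by
    rw [card_filter_eq_countP x n (fun b => b ≤ M), ← hL]
  have hk' : k ≤ L.countP (fun a => decide (a ≤ M)) := by
    calc k = (L.take k).length := by rw [List.length_take]; omega
      _ = (L.take k).countP (fun a => decide (a ≤ M)) := by
          symm
          rw [List.countP_eq_length]
          intro a ha
          rw [List.mem_iff_getElem] at ha
          obtain ⟨j, hj, rfl⟩ := ha
          have hjlen : j < L.length := by
            have := hj; rw [List.length_take] at this; omega
          have hjk : j < k := by have := hj; rw [List.length_take] at this; omega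
          have hjt : (L.take k)[j] = L[j] := List.getElem_take ..
          rw [hjt]
          simp only [decide_eq_true_eq]
          calc L[j] ≤ L[k-1] :=
                hsort.rel_get_of_le (a := ⟨j, hjlen⟩) (b := ⟨k-1, hklen⟩) (by simp; omega)
            _ ≤ M := hs ▸ hcon
      _ ≤ L.countP (fun a => decide (a ≤ M)) := List.Sublist.countP_le (List.take_sublist ..)
  omega

lemma nearCount_add_le (a m₀ : ℝ) (ha : 0 < a) (hk1 : 1 ≤ k) (hkn : k ≤ n)
    (hgt : m₀ < ordStat k n x - a) :
    nearCount k n a x + ((Finset.range n).filter (fun i => x i ≤ m₀)).card ≤ k := by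
  classical
  set A := (Finset.range n).filter
    (fun i => ordStat k n x - a < x i ∧ x i < ordStat k n x) with hA
  set B := (Finset.range n).filter (fun i => x i ≤ m₀) with hB
  have hdisj : Disjoint A B := by
    rw [Finset.disjoint_left]
    intro i hiA hiB
    rw [hA, Finset.mem_filter] at hiA
    rw [hB, Finset.mem_filter] at hiB
    linarith [hiA.2.1, hiB.2]
  have hsub : A ∪ B ⊆ (Finset.range n).filter (fun i => x i < ordStat k n x) := by
    intro i hi
    rw [Finset.mem_union] at hi
    rcases hi with hi | hi
    · rw [hA, Finset.mem_filter] at hi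
      exact Finset.mem_filter.2 ⟨hi.1, hi.2.2⟩
    · rw [hB, Finset.mem_filter] at hi
      refine Finset.mem_filter.2 ⟨hi.1, ?_⟩
      linarith [hi.2]
  calc nearCount k n a x + B.card = (A ∪ B).card := by
        rw [nearCount, ← hA, Finset.card_union_of_disjoint hdisj]
    _ ≤ ((Finset.range n).filter (fun i => x i < ordStat k n x)).card :=
        Finset.card_le_card hsub
    _ ≤ k - 1 := count_lt_ordStat x n k hk1 hkn
    _ ≤ k := by omega


noncomputable section



namespace BirkhoffAux

variable {α : Type*} [MeasurableSpace α] {μ : Measure α} [IsProbabilityMeasure μ]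
  {T : α → α} {f : α → ℝ} {C : ℝ}

/-- max of Birkhoff sums `S_0, …, S_n`. -/
def maxS (T : α → α) (f : α → ℝ) (n : ℕ) (x : α) : ℝ :=
  (Finset.range (n+1)).sup' Finset.nonempty_range_add_one (fun j => birkhoffSum T f j x)

lemma maxS_nonneg (n : ℕ) (x : α) : 0 ≤ maxS T f n x := by
  rw [maxS]
  exact Finset.le_sup'_of_le (fun j => birkhoffSum T f j x)
    (Finset.mem_range.mpr (Nat.succ_pos n)) (le_of_eq (birkhoffSum_zero T f x).symm)

lemma maxS_mono (x : α) : Monotone fun n => maxS T f n x := by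
  intro m n hmn
  show maxS T f m x ≤ maxS T f n x
  rw [maxS, maxS]
  refine Finset.sup'_le _ _ fun j hj => Finset.le_sup' (fun j => birkhoffSum T f j x) ?_
  simp only [Finset.mem_range] at hj ⊢; omega

lemma measurable_birkhoffSum (hT : Measurable T) (hf : Measurable f) (n : ℕ) :
    Measurable (birkhoffSum T f n) := by
  unfold birkhoffSum
  exact Finset.measurable_sum _ fun k _ => hf.comp (hT.iterate k)

lemma measurable_maxS (hT : Measurable T) (hf : Measurable f) (n : ℕ) :
    Measurable (maxS T f n) := by
  unfold maxS
  exact Finset.measurable_range_sup'' fun k _ => measurable_birkhoffSum hT hf k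

lemma abs_birkhoffSum_le (hC : ∀ x, |f x| ≤ C) (n : ℕ) (x : α) :
    |birkhoffSum T f n x| ≤ n * |C| := by
  unfold birkhoffSum
  calc |∑ k ∈ Finset.range n, f (T^[k] x)| ≤ ∑ k ∈ Finset.range n, |f (T^[k] x)| :=
        Finset.abs_sum_le_sum_abs _ _
    _ ≤ ∑ _k ∈ Finset.range n, |C| :=
        Finset.sum_le_sum fun k _ => le_trans (hC _) (le_abs_self _)
    _ = n * |C| := by simp [Finset.sum_const, mul_comm]

lemma abs_maxS_le (hC : ∀ x, |f x| ≤ C) (n : ℕ) (x : α) :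
    |maxS T f n x| ≤ n * |C| + |C| := by
  rw [abs_of_nonneg (maxS_nonneg n x)]
  refine Finset.sup'_le _ _ fun j hj => ?_
  simp only [Finset.mem_range] at hj
  calc birkhoffSum T f j x ≤ |birkhoffSum T f j x| := le_abs_self _
    _ ≤ j * |C| := abs_birkhoffSum_le hC j x
    _ ≤ n * |C| + |C| := by
        have : (j:ℝ) ≤ n + 1 := by exact_mod_cast Nat.le_of_lt_succ hj |>.trans (by omega) |>.trans_eq rfl
        nlinarith [abs_nonneg C]

lemma integrable_of_bdd {g : α → ℝ} (hg : Measurable g) {D : ℝ} (hD : ∀ x, |g x| ≤ D) :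
    Integrable g μ :=
  (integrable_const D).mono' hg.aestronglyMeasurable (Eventually.of_forall fun x => by
    simpa using hD x)

/-- Maximal ergodic theorem (Garsia's proof), for bounded measurable `f`. -/
theorem maximal (hT : MeasurePreserving T μ μ) (hf : Measurable f) (hC : ∀ x, |f x| ≤ C)
    (n : ℕ) : 0 ≤ ∫ x in {x | 0 < maxS T f n x}, f x ∂μ := by
  set E := {x | 0 < maxS T f n x} with hE
  have hTm := hT.measurable
  have hMm : Measurable (maxS T f n) := measurable_maxS hTm hf n
  have hEm : MeasurableSet E := measurableSet_lt measurable_const hMm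
  have hfi : Integrable f μ := integrable_of_bdd hf (fun x => (hC x).trans (le_abs_self C))
  have hMi : Integrable (maxS T f n) μ := integrable_of_bdd hMm (abs_maxS_le hC n)
  have hMTi : Integrable (fun x => maxS T f n (T x)) μ :=
    integrable_of_bdd (hMm.comp hTm) (fun x => abs_maxS_le hC n (T x))
  have key : ∀ x ∈ E, maxS T f n x - maxS T f n (T x) ≤ f x := by
    intro x hx
    obtain ⟨j, hj, hjeq⟩ :=
      Finset.exists_mem_eq_sup' (s := Finset.range (n+1)) Finset.nonempty_range_add_one
        (fun j => birkhoffSum T f j x)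
    match j, hj with
    | 0, _ =>
      exfalso
      have : maxS T f n x = 0 := by rw [maxS, hjeq, birkhoffSum_zero]
      rw [hE, mem_setOf_eq, this] at hx
      exact lt_irrefl _ hx
    | (m+1), hj =>
      have hm : m ∈ Finset.range (n+1) := by
        simp only [Finset.mem_range] at hj ⊢; omega
      have h1 : maxS T f n x = f x + birkhoffSum T f m (T x) := by
        rw [maxS, hjeq, birkhoffSum_succ']
      have h2 : birkhoffSum T f m (T x) ≤ maxS T f n (T x) :=
        Finset.le_sup' (fun j => birkhoffSum T f j (T x)) hm
      linarith
  have h1 : ∫ x in E, (maxS T f n x - maxS T f n (T x)) ∂μ ≤ ∫ x in E, f x ∂μ :=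
    setIntegral_mono_on (hMi.sub hMTi).integrableOn hfi.integrableOn hEm key
  have h2 : ∫ x in E, (maxS T f n x - maxS T f n (T x)) ∂μ
      = ∫ x in E, maxS T f n x ∂μ - ∫ x in E, maxS T f n (T x) ∂μ :=
    integral_sub hMi.integrableOn hMTi.integrableOn
  have h3 : ∫ x in E, maxS T f n (T x) ∂μ ≤ ∫ x, maxS T f n (T x) ∂μ :=
    setIntegral_le_integral hMTi (Eventually.of_forall fun x => maxS_nonneg n (T x))
  have h4 : ∫ x, maxS T f n (T x) ∂μ = ∫ x, maxS T f n x ∂μ := by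
    have := integral_map (μ := μ) (φ := T) hTm.aemeasurable hMm.aestronglyMeasurable
    rw [hT.map_eq] at this
    exact this.symm
  have h5 : ∫ x, maxS T f n x ∂μ = ∫ x in E, maxS T f n x ∂μ + ∫ x in Eᶜ, maxS T f n x ∂μ :=
    (integral_add_compl hEm hMi).symm
  have h6 : ∫ x in Eᶜ, maxS T f n x ∂μ = 0 := by
    rw [setIntegral_congr_fun hEm.compl (g := fun _ => 0), integral_zero]
    intro x hx
    simp only [hE, mem_compl_iff, mem_setOf_eq, not_lt] at hx
    exact le_antisymm hx (maxS_nonneg n x)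
  linarith

set_option linter.unusedSectionVars false

section limsupHelpers

lemma limsup_le_of_eps {v : ℕ → ℝ} {A : ℝ} (hvb : ∃ c, ∀ n, c ≤ v n)
    (h : ∀ ε : ℝ, 0 < ε → ∀ᶠ n in atTop, v n ≤ A + ε) :
    limsup v atTop ≤ A := by
  obtain ⟨c, hc⟩ := hvb
  have hcb : IsCoboundedUnder (· ≤ ·) atTop v := isCoboundedUnder_le_of_le atTop hc
  refine le_of_forall_pos_le_add fun ε hε => ?_
  exact limsup_le_of_le hcb (h ε hε)

lemma shift_limsup_le {u v : ℕ → ℝ} {C : ℝ}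
    (hu : ∀ n, |u n| ≤ C) (hv : ∀ n, |v n| ≤ C)
    (h : ∀ n : ℕ, 1 ≤ n → v n ≤ u (n+1) + 2*C/n) :
    limsup v atTop ≤ limsup u atTop := by
  have hubdd : IsBoundedUnder (· ≤ ·) atTop u :=
    isBoundedUnder_of ⟨C, fun n => (abs_le.1 (hu n)).2⟩
  refine limsup_le_of_eps ⟨-C, fun n => (abs_le.1 (hv n)).1⟩ fun ε hε => ?_
  have hev : ∀ᶠ n in atTop, u n < limsup u atTop + ε/2 :=
    eventually_lt_of_limsup_lt (by linarith) hubdd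
  have hev' : ∀ᶠ n in atTop, u (n+1) < limsup u atTop + ε/2 :=
    (tendsto_add_atTop_nat 1).eventually hev
  have hd0 : Tendsto (fun n : ℕ => 2*C/(n:ℝ)) atTop (𝓝 0) :=
    tendsto_const_div_atTop_nhds_zero_nat (2*C)
  have hd : ∀ᶠ n : ℕ in atTop, 2*C/(n:ℝ) < ε/2 :=
    hd0.eventually_lt_const (show (0:ℝ) < ε/2 by linarith)
  filter_upwards [hev', hd, eventually_ge_atTop 1] with n h1 h2 h3
  have := h n h3
  linarith

lemma shift_limsup_ge {u v : ℕ → ℝ} {C : ℝ}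
    (hu : ∀ n, |u n| ≤ C) (hv : ∀ n, |v n| ≤ C)
    (h : ∀ n : ℕ, 1 ≤ n → u (n+1) ≤ v n + 2*C/n) :
    limsup u atTop ≤ limsup v atTop := by
  have hvbdd : IsBoundedUnder (· ≤ ·) atTop v :=
    isBoundedUnder_of ⟨C, fun n => (abs_le.1 (hv n)).2⟩
  refine limsup_le_of_eps ⟨-C, fun n => (abs_le.1 (hu n)).1⟩ fun ε hε => ?_
  have hev : ∀ᶠ n in atTop, v n < limsup v atTop + ε/2 :=
    eventually_lt_of_limsup_lt (by linarith) hvbdd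
  have hd0 : Tendsto (fun n : ℕ => 2*C/(n:ℝ)) atTop (𝓝 0) :=
    tendsto_const_div_atTop_nhds_zero_nat (2*C)
  have hd : ∀ᶠ n : ℕ in atTop, 2*C/(n:ℝ) < ε/2 :=
    hd0.eventually_lt_const (show (0:ℝ) < ε/2 by linarith)
  have key : ∀ᶠ n in atTop, u (n+1) ≤ limsup v atTop + ε := by
    filter_upwards [hev, hd, eventually_ge_atTop 1] with n h1 h2 h3
    have := h n h3
    linarith
  obtain ⟨N, hN⟩ := eventually_atTop.1 key
  rw [eventually_atTop]
  exact ⟨N + 1, fun m hm => by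
    obtain ⟨n, rfl⟩ : ∃ n, m = n + 1 := ⟨m - 1, by omega⟩
    exact hN n (by omega)⟩

end limsupHelpers

section birkhoff

lemma abs_avg_le (hC : ∀ x, |f x| ≤ C) (n : ℕ) (x : α) :
    |birkhoffSum T f n x / n| ≤ |C| := by
  rcases Nat.eq_zero_or_pos n with rfl | hn
  · simp
  · have hn0 : (0:ℝ) < n := by exact_mod_cast hn
    rw [abs_div, abs_of_pos hn0, div_le_iff₀ hn0]
    calc |birkhoffSum T f n x| ≤ n * |C| := abs_birkhoffSum_le hC n x
      _ = |C| * n := mul_comm _ _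

lemma limsup_avg_shift (hC : ∀ x, |f x| ≤ C) (x : α) :
    limsup (fun n => birkhoffSum T f n (T x) / n) atTop
      = limsup (fun n => birkhoffSum T f n x / n) atTop := by
  set u : ℕ → ℝ := fun n => birkhoffSum T f n x / n with hu
  set v : ℕ → ℝ := fun n => birkhoffSum T f n (T x) / n with hv
  have hub : ∀ n, |u n| ≤ |C| := fun n => abs_avg_le hC n x
  have hvb : ∀ n, |v n| ≤ |C| := fun n => abs_avg_le hC n (T x)
  have hdiff : ∀ n : ℕ, 1 ≤ n → |v n - u (n+1)| ≤ 2*|C|/n := by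
    intro n hn
    have hn0 : (0:ℝ) < n := by exact_mod_cast hn
    have hn1 : (0:ℝ) < (n:ℝ) + 1 := by positivity
    have hS : birkhoffSum T f n (T x) = birkhoffSum T f (n+1) x - f x := by
      rw [birkhoffSum_succ']; ring
    have e1 : v n - u (n+1) = birkhoffSum T f (n+1) x / ((n:ℝ)*(n+1)) - f x / n := by
      simp only [hv, hu, hS, Nat.cast_add, Nat.cast_one]
      field_simp
      ring
    have hb1 : |birkhoffSum T f (n+1) x / ((n:ℝ)*(n+1))| ≤ |C| / n := by
      have hd : (0:ℝ) < (n:ℝ)*((n:ℝ)+1) := mul_pos hn0 hn1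
      rw [abs_div, abs_of_pos hd, div_le_div_iff₀ hd hn0]
      have h' : |birkhoffSum T f (n+1) x| ≤ ((n:ℝ)+1) * |C| := by
        have h := abs_birkhoffSum_le (T := T) hC (n+1) x
        push_cast at h
        linarith
      nlinarith [abs_nonneg (birkhoffSum T f (n+1) x), abs_nonneg C]
    have hb2 : |f x / (n:ℝ)| ≤ |C| / n := by
      rw [abs_div, abs_of_pos hn0, div_le_div_iff₀ hn0 hn0]
      exact mul_le_mul_of_nonneg_right ((hC x).trans (le_abs_self C)) hn0.le
    calc |v n - u (n+1)|
        = |birkhoffSum T f (n+1) x / ((n:ℝ)*((n:ℝ)+1)) - f x / (n:ℝ)| := by rw [e1]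
      _ ≤ |birkhoffSum T f (n+1) x / ((n:ℝ)*((n:ℝ)+1))| + |f x / (n:ℝ)| := by
          rw [sub_eq_add_neg]
          exact (abs_add_le _ _).trans (by rw [abs_neg])
      _ ≤ |C|/n + |C|/n := add_le_add hb1 hb2
      _ = 2*|C|/n := by ring
  have hle1 : ∀ n : ℕ, 1 ≤ n → v n ≤ u (n+1) + 2*|C|/n := fun n hn => by
    have h := (abs_le.1 (hdiff n hn)).2
    linarith
  have hle2 : ∀ n : ℕ, 1 ≤ n → u (n+1) ≤ v n + 2*|C|/n := fun n hn => by
    have h := (abs_le.1 (hdiff n hn)).1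
    linarith
  exact le_antisymm (shift_limsup_le hub hvb hle1) (shift_limsup_ge hub hvb hle2)


theorem limsup_avg_ae_le (herg : Ergodic T μ) (hf : Measurable f) (hC : ∀ x, |f x| ≤ C) :
    ∀ᵐ x ∂μ, limsup (fun n => birkhoffSum T f n x / n) atTop ≤ ∫ x, f x ∂μ := by
  have hTm := herg.toMeasurePreserving.measurable
  have hfi : Integrable f μ := integrable_of_bdd hf (fun x => (hC x).trans (le_abs_self C))
  set L : α → ℝ := fun x => limsup (fun n => birkhoffSum T f n x / n) atTop with hL
  have hLm : Measurable L :=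
    Measurable.limsup fun n => (measurable_birkhoffSum hTm hf n).div_const _
  have hLT : L ∘ T = L := funext fun x => limsup_avg_shift hC x
  obtain ⟨c, hc⟩ := herg.ae_eq_const_of_ae_eq_comp₀ hLm.nullMeasurable (by rw [hLT])
  have hcle : c ≤ ∫ x, f x ∂μ := by
    refine le_of_forall_pos_le_add fun ε hε => ?_
    set g : α → ℝ := fun x => f x - (c - ε) with hg
    have hgm : Measurable g := hf.sub measurable_const
    set D : ℝ := C + |c - ε| with hD
    have hgC : ∀ x, |g x| ≤ D := fun x => by
      calc |g x| = |f x - (c - ε)| := rfl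
        _ ≤ |f x| + |c - ε| := by
            rw [sub_eq_add_neg]
            exact (abs_add_le _ _).trans (by rw [abs_neg])
        _ ≤ C + |c - ε| := by linarith [hC x]
    have hE : ∀ n, MeasurableSet {y | 0 < maxS T g n y} := fun n =>
      measurableSet_lt measurable_const (measurable_maxS hTm hgm n)
    have hEmono : Monotone fun n => {y | 0 < maxS T g n y} := fun m n hmn y hy =>
      lt_of_lt_of_le hy (maxS_mono y hmn)
    have hgi : Integrable g μ := integrable_of_bdd hgm (fun x => (hgC x).trans (le_abs_self D))
    have hmax : ∀ n, 0 ≤ ∫ x in {y | 0 < maxS T g n y}, g x ∂μ := fun n =>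
      maximal herg.toMeasurePreserving hgm hgC n
    set U : Set α := ⋃ n, {y | 0 < maxS T g n y} with hU
    have hUm : MeasurableSet U := MeasurableSet.iUnion hE
    have htend : Tendsto (fun n => ∫ x in {y | 0 < maxS T g n y}, g x ∂μ) atTop
        (𝓝 (∫ x in U, g x ∂μ)) :=
      tendsto_setIntegral_of_monotone hE hEmono hgi.integrableOn
    have hcover : ∀ᵐ x ∂μ, x ∈ U := by
      filter_upwards [hc] with x hx
      have hxc : limsup (fun n => birkhoffSum T f n x / n) atTop = c := hx
      have hcb : IsCoboundedUnder (· ≤ ·) atTop (fun n => birkhoffSum T f n x / n) :=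
        isCoboundedUnder_le_of_le atTop fun n => (abs_le.1 (abs_avg_le hC n x)).1
      have hfreq : ∃ᶠ n in atTop, c - ε/2 < birkhoffSum T f n x / n :=
        frequently_lt_of_lt_limsup hcb (by rw [hxc]; linarith)
      obtain ⟨n, hun, hn1⟩ := (hfreq.and_eventually (eventually_ge_atTop 1)).exists
      refine mem_iUnion.2 ⟨n, ?_⟩
      have hn0 : (0:ℝ) < n := by exact_mod_cast hn1
      have hSg : birkhoffSum T g n x = birkhoffSum T f n x - n * (c - ε) := by
        unfold g
        unfold birkhoffSum
        rw [Finset.sum_sub_distrib, Finset.sum_const, Finset.card_range, nsmul_eq_mul]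
      have h0 : 0 < birkhoffSum T g n x := by
        rw [hSg]
        have := (lt_div_iff₀ hn0).1 hun
        nlinarith
      show 0 < maxS T g n x
      refine lt_of_lt_of_le h0 ?_
      rw [maxS]
      exact Finset.le_sup'_of_le (fun j => birkhoffSum T g j x)
        (Finset.self_mem_range_succ n) le_rfl
    have hcompl : ∫ x in U, g x ∂μ = ∫ x, g x ∂μ := by
      have h0 : μ Uᶜ = 0 := by
        have := ae_iff.1 hcover
        simpa [compl_def] using this
      rw [← integral_add_compl hUm hgi]
      have hz : ∫ x in Uᶜ, g x ∂μ = 0 := by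
        rw [Measure.restrict_eq_zero.2 h0, integral_zero_measure]
      rw [hz, add_zero]
    have hge : 0 ≤ ∫ x, g x ∂μ := by
      rw [← hcompl]
      exact ge_of_tendsto htend (Eventually.of_forall hmax)
    have hgint : ∫ x, g x ∂μ = (∫ x, f x ∂μ) - (c - ε) := by
      unfold g
      rw [integral_sub hfi (integrable_const _), integral_const, probReal_univ]
      simp
    linarith
  filter_upwards [hc] with x hx
  exact le_of_eq_of_le hx hcle

theorem birkhoff_bounded (herg : Ergodic T μ) (hf : Measurable f) (hC : ∀ x, |f x| ≤ C) :
    ∀ᵐ x ∂μ, Tendsto (fun n => birkhoffSum T f n x / n) atTop (𝓝 (∫ x, f x ∂μ)) := by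
  have h1 := limsup_avg_ae_le herg hf hC
  have h2 := limsup_avg_ae_le (f := fun y => -(f y)) (C := C) herg hf.neg
    (fun y => by rw [abs_neg]; exact hC y)
  have hneg : ∀ (n : ℕ) (x : α), birkhoffSum T (fun y => -(f y)) n x
      = -(birkhoffSum T f n x) := fun n x => by
    unfold birkhoffSum
    rw [← Finset.sum_neg_distrib]
  have hInt : ∫ x, -(f x) ∂μ = -∫ x, f x ∂μ := integral_neg f
  filter_upwards [h1, h2] with x hx1 hx2
  set u : ℕ → ℝ := fun n => birkhoffSum T f n x / n with hu
  have hub : ∀ n, |u n| ≤ |C| := fun n => abs_avg_le hC n x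
  have hx2' : limsup (fun n => -(u n)) atTop ≤ -∫ x, f x ∂μ := by
    have : (fun n : ℕ => birkhoffSum T (fun y => -(f y)) n x / n) = fun n => -(u n) := by
      funext n
      rw [hneg, neg_div]
    rw [this, hInt] at hx2
    exact hx2
  have hliminf : (∫ x, f x ∂μ) ≤ liminf u atTop := by
    have hcb : IsCoboundedUnder (· ≥ ·) atTop u :=
      isCoboundedUnder_ge_of_le atTop fun n => (abs_le.1 (hub n)).2
    have hbddneg : IsBoundedUnder (· ≤ ·) atTop fun n => -(u n) :=
      isBoundedUnder_of ⟨|C|, fun n => by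
        have := (abs_le.1 (hub n)).1
        linarith⟩
    have key : ∀ ε : ℝ, 0 < ε → (∫ x, f x ∂μ) ≤ liminf u atTop + ε := by
      intro ε hε
      have hev : ∀ᶠ n in atTop, -(u n) < -(∫ x, f x ∂μ) + ε :=
        eventually_lt_of_limsup_lt (lt_of_le_of_lt hx2' (by linarith)) hbddneg
      have hev' : ∀ᶠ n in atTop, (∫ x, f x ∂μ) - ε ≤ u n := by
        filter_upwards [hev] with n hn
        linarith
      have := le_liminf_of_le hcb hev'
      linarith
    exact le_of_forall_pos_le_add key
  exact tendsto_of_le_liminf_of_limsup_le hliminf hx1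
    (isBoundedUnder_of ⟨|C|, fun n => (abs_le.1 (hub n)).2⟩)
    (isBoundedUnder_of ⟨-|C|, fun n => (abs_le.1 (hub n)).1⟩)

end birkhoff

end BirkhoffAux

namespace StmtAux

open BirkhoffAux

lemma measurable_seqShift : Measurable seqShift :=
  measurable_pi_lambda _ fun n => measurable_pi_apply (n+1)

lemma seqShift_iterate_zero (i : ℕ) (y : ℕ → ℝ) : (seqShift^[i] y) 0 = y i := by
  induction i generalizing y with
  | zero => rfl
  | succ i ih =>
    rw [Function.iterate_succ_apply, ih]
    rfl

def ind (M : ℝ) : (ℕ → ℝ) → ℝ := fun y => if y 0 ≤ M then 1 else 0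

lemma measurable_ind (M : ℝ) : Measurable (ind M) := by
  unfold ind
  exact Measurable.ite (measurableSet_le (measurable_pi_apply 0) measurable_const)
    measurable_const measurable_const

lemma abs_ind_le (M : ℝ) (y : ℕ → ℝ) : |ind M y| ≤ 1 := by
  unfold ind
  split <;> simp

lemma birkhoffSum_ind (M : ℝ) (n : ℕ) (y : ℕ → ℝ) :
    birkhoffSum seqShift (ind M) n y
      = ∑ i ∈ Finset.range n, if y i ≤ M then (1:ℝ) else 0 := by
  unfold birkhoffSum
  refine Finset.sum_congr rfl fun i _ => ?_
  unfold ind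
  rw [seqShift_iterate_zero]

lemma card_filter_le_cast (M : ℝ) (n : ℕ) (y : ℕ → ℝ) :
    (((Finset.range n).filter (fun i => y i ≤ M)).card : ℝ)
      = ∑ i ∈ Finset.range n, if y i ≤ M then (1:ℝ) else 0 := by
  classical
  rw [Finset.card_filter]
  push_cast
  rfl

lemma integral_ind (μ' : Measure (ℕ → ℝ)) [IsProbabilityMeasure μ'] (M : ℝ) :
    ∫ y, ind M y ∂μ' = (μ' {y | y 0 ≤ M}).toReal := by
  have h : ind M = Set.indicator {y : ℕ → ℝ | y 0 ≤ M} (fun _ => (1:ℝ)) := by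
    funext y
    simp only [ind, Set.indicator_apply, mem_setOf_eq]
  rw [h, integral_indicator (measurableSet_le (measurable_pi_apply 0) measurable_const)]
  simp
  rfl

end StmtAux
theorem stmt6 {Ω : Type*} [MeasurableSpace Ω] (μ : Measure Ω) [IsProbabilityMeasure μ]
    (X : ℕ → Ω → ℝ) (hX : ∀ n, Measurable (X n))
    (herg : Ergodic seqShift (Measure.map (path X) μ))
    (hsup : rightEndpoint μ (X 0) = ⊤)
    (a : ℝ) (ha : 0 < a)
    (k : ℕ → ℕ) (hk : ∀ n, 1 ≤ n → 1 ≤ k n ∧ k n ≤ n)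
    (hk1 : Tendsto (fun n => (k n : ℝ) / n) atTop (𝓝 1)) :
    ∀ᵐ ω ∂μ, Tendsto (fun n => (nearCount (k n) n a (path X ω) : ℝ) / n) atTop (𝓝 0) := by
  classical
  set μ' := Measure.map (path X) μ with hμ'
  have hpath : Measurable (path X) := measurable_pi_lambda _ hX
  haveI : IsProbabilityMeasure μ' := Measure.isProbabilityMeasure_map hpath.aemeasurable
  set F : ℝ → ℝ := fun M => (μ {ω | X 0 ω ≤ M}).toReal with hF
  have hμset : ∀ M : ℝ, μ' {y | y 0 ≤ M} = μ {ω | X 0 ω ≤ M} := fun M => by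
    rw [hμ', Measure.map_apply hpath (measurableSet_le (measurable_pi_apply 0) measurable_const)]
    rfl
  -- Birkhoff ergodic theorem for the indicator of `{y | y 0 ≤ m}`
  have hbirk : ∀ m : ℕ, ∀ᵐ ω ∂μ,
      Tendsto (fun n => (∑ i ∈ Finset.range n,
          if path X ω i ≤ (m:ℝ) then (1:ℝ) else 0) / n) atTop (𝓝 (F m)) := by
    intro m
    have h1 : ∀ᵐ y ∂μ', Tendsto (fun n => birkhoffSum seqShift (StmtAux.ind (m:ℝ)) n y / n)
        atTop (𝓝 (∫ y, StmtAux.ind (m:ℝ) y ∂μ')) :=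
      BirkhoffAux.birkhoff_bounded herg (StmtAux.measurable_ind _) (StmtAux.abs_ind_le _)
    rw [StmtAux.integral_ind, hμset] at h1
    have hms : MeasurableSet {y : ℕ → ℝ |
        Tendsto (fun n => birkhoffSum seqShift (StmtAux.ind (m:ℝ)) n y / n) atTop (𝓝 (F m))} :=
      measurableSet_tendsto _ fun n =>
        (BirkhoffAux.measurable_birkhoffSum StmtAux.measurable_seqShift
          (StmtAux.measurable_ind _) n).div_const _
    have h1' : ∀ᵐ ω ∂μ, Tendsto
        (fun n => birkhoffSum seqShift (StmtAux.ind (m:ℝ)) n (path X ω) / n)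
        atTop (𝓝 (F m)) := by
      rw [hμ'] at h1
      exact (ae_map_iff hpath.aemeasurable hms).1 h1
    refine h1'.mono fun ω hω => ?_
    have heq : (fun n => (∑ i ∈ Finset.range n,
          if path X ω i ≤ (m:ℝ) then (1:ℝ) else 0) / n)
        = fun n => birkhoffSum seqShift (StmtAux.ind (m:ℝ)) n (path X ω) / n :=
      funext fun n => by rw [StmtAux.birkhoffSum_ind]
    rw [heq]
    exact hω
  -- the distribution function is `< 1` everywhere
  have hFlt : ∀ M : ℝ, μ {ω | X 0 ω ≤ M} < 1 := by
    intro M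
    by_contra hcon
    push_neg at hcon
    have hle : rightEndpoint μ (X 0) ≤ (M : EReal) := by
      rw [rightEndpoint]
      refine sSup_le ?_
      rintro b ⟨r, hr, rfl⟩
      simp only [mem_setOf_eq] at hr
      have hrM : r ≤ M := by
        by_contra hrM
        push_neg at hrM
        have hsub : {ω | X 0 ω ≤ M} ⊆ {ω | X 0 ω ≤ r} := fun ω hω =>
          le_trans hω hrM.le
        exact absurd (lt_of_le_of_lt (le_trans hcon (measure_mono hsub)) hr) (lt_irrefl _)
      exact EReal.coe_le_coe_iff.2 hrM
    rw [hsup] at hle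
    exact absurd hle (by simp)
  have hFlt' : ∀ m : ℕ, F m < 1 := fun m => by
    rw [hF]
    have h := hFlt m
    have : (μ {ω | X 0 ω ≤ (m:ℝ)}).toReal < (1 : ℝ≥0∞).toReal :=
      (ENNReal.toReal_lt_toReal (measure_ne_top μ _) ENNReal.one_ne_top).2 h
    simpa using this
  -- the distribution function tends to 1
  have hFtend : Tendsto (fun m : ℕ => F m) atTop (𝓝 1) := by
    have hmono : Monotone fun m : ℕ => {ω | X 0 ω ≤ (m:ℝ)} := fun p q hpq ω hω => by
      simp only [mem_setOf_eq] at hω ⊢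
      exact le_trans hω (Nat.cast_le.2 hpq)
    have hunion : ⋃ m : ℕ, {ω | X 0 ω ≤ (m:ℝ)} = univ := by
      refine eq_univ_of_forall fun ω => mem_iUnion.2 ?_
      obtain ⟨m, hm⟩ := exists_nat_ge (X 0 ω)
      exact ⟨m, hm⟩
    have h := tendsto_measure_iUnion_atTop (μ := μ) hmono
    rw [hunion, measure_univ] at h
    have h2 := (ENNReal.tendsto_toReal ENNReal.one_ne_top).comp h
    simpa [hF, Function.comp_def] using h2
  have hgood : ∀ᵐ ω ∂μ, ∀ m : ℕ,
      Tendsto (fun n => (∑ i ∈ Finset.range n,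
          if path X ω i ≤ (m:ℝ) then (1:ℝ) else 0) / n) atTop (𝓝 (F m)) :=
    ae_all_iff.2 hbirk
  filter_upwards [hgood] with ω hω
  set x := path X ω with hx
  rw [NormedAddCommGroup.tendsto_nhds_zero]
  intro ε hε
  obtain ⟨m₀, hm₀⟩ := (hFtend.eventually_const_lt (show 1 - ε/2 < 1 by linarith)).exists
  obtain ⟨m₁', hm₁'⟩ := exists_nat_ge ((m₀:ℝ) + a)
  set m₁ : ℕ := m₁' with hm₁def
  have hm₁ : (m₀:ℝ) + a ≤ (m₁:ℝ) := hm₁'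
  have hc1 := hω m₁
  have hc0 := hω m₀
  have hδ : F m₁ < 1 := hFlt' m₁
  have ev1 : ∀ᶠ n in atTop, (∑ i ∈ Finset.range n,
      if x i ≤ (m₁:ℝ) then (1:ℝ) else 0) / n < (1 + F m₁)/2 :=
    hc1.eventually_lt_const (by linarith)
  have ev2 : ∀ᶠ n in atTop, (1 + F m₁)/2 < (k n : ℝ)/n :=
    hk1.eventually_const_lt (by linarith)
  have ev3 : ∀ᶠ n in atTop, F m₀ - ε/2 < (∑ i ∈ Finset.range n,
      if x i ≤ (m₀:ℝ) then (1:ℝ) else 0) / n :=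
    hc0.eventually_const_lt (by linarith)
  filter_upwards [ev1, ev2, ev3, eventually_ge_atTop 1] with n h1 h2 h3 hn1
  obtain ⟨hk1n, hkn⟩ := hk n hn1
  have hn0 : (0:ℝ) < n := by exact_mod_cast hn1
  have hcast1 : (((Finset.range n).filter (fun i => x i ≤ (m₁:ℝ))).card : ℝ)
      = ∑ i ∈ Finset.range n, if x i ≤ (m₁:ℝ) then (1:ℝ) else 0 :=
    StmtAux.card_filter_le_cast _ _ _
  have hcast0 : (((Finset.range n).filter (fun i => x i ≤ (m₀:ℝ))).card : ℝ)
      = ∑ i ∈ Finset.range n, if x i ≤ (m₀:ℝ) then (1:ℝ) else 0 :=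
    StmtAux.card_filter_le_cast _ _ _
  have hcard1 : ((Finset.range n).filter (fun i => x i ≤ (m₁:ℝ))).card < k n := by
    have hr : (((Finset.range n).filter (fun i => x i ≤ (m₁:ℝ))).card : ℝ) < (k n : ℝ) := by
      rw [hcast1]
      have hlt : (∑ i ∈ Finset.range n, if x i ≤ (m₁:ℝ) then (1:ℝ) else 0) / n
          < (k n : ℝ)/n := lt_trans h1 h2
      calc (∑ i ∈ Finset.range n, if x i ≤ (m₁:ℝ) then (1:ℝ) else 0)
          = ((∑ i ∈ Finset.range n, if x i ≤ (m₁:ℝ) then (1:ℝ) else 0) / n) * n := by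
            field_simp
        _ < ((k n : ℝ)/n) * n := by
            exact mul_lt_mul_of_pos_right hlt hn0
        _ = (k n : ℝ) := by field_simp
    exact_mod_cast hr
  have hord : (m₁:ℝ) < ordStat (k n) n x :=
    lt_ordStat_of_count_lt x n (k n) hk1n hkn _ hcard1
  have hord' : (m₀:ℝ) < ordStat (k n) n x - a := by linarith
  have hmain := nearCount_add_le x n (k n) a m₀ ha hk1n hkn hord'
  have hmainR : (nearCount (k n) n a x : ℝ)
      + (∑ i ∈ Finset.range n, if x i ≤ (m₀:ℝ) then (1:ℝ) else 0) ≤ (k n : ℝ) := by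
    rw [← hcast0]
    exact_mod_cast hmain
  have hkn_le : (k n : ℝ)/n ≤ 1 := by
    rw [div_le_one hn0]
    exact_mod_cast hkn
  have hc0n : (∑ i ∈ Finset.range n, if x i ≤ (m₀:ℝ) then (1:ℝ) else 0) / n > F m₀ - ε/2 := h3
  have hfinal : (nearCount (k n) n a x : ℝ)/n < ε := by
    have hdiv : (nearCount (k n) n a x : ℝ)/n
        + (∑ i ∈ Finset.range n, if x i ≤ (m₀:ℝ) then (1:ℝ) else 0) / n ≤ (k n : ℝ)/n := by
      rw [← add_div]
      gcongr
    linarith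
  rw [Real.norm_eq_abs, abs_of_nonneg (by positivity)]
  exact hfinal
end
end
end

section
/- Let X be a real random variable on a probability space (Ω, F, P) and let G ⊆ F be a sub-σ-field. Then there exists a G-measurable extended random variable Q : Ω → [−∞, ∞] such that P(X ≤ Q | G) = 1 almost surely, and for every G-measurable extended random variable Q' with P(X ≤ Q' | G) = 1 almost surely one has Q ≤ Q' almost surely. -/
open MeasureTheory Filter Set
open scoped Topology ENNReal

noncomputable section

/-- `Q` is a version of the conditional right endpoint of the support of `X` given the
sub-σ-field `m`: it is `m`-measurable, `P(X ≤ Q | m) = 1` a.s., and it is a.s. minimal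
among all such `m`-measurable extended random variables. -/
def IsCondRightEndpoint {Ω : Type*} [MeasurableSpace Ω] (μ : Measure Ω)
    (m : MeasurableSpace Ω) (X : Ω → ℝ) (Q : Ω → EReal) : Prop :=
  Measurable[m] Q ∧
  μ[Set.indicator {ω | (X ω : EReal) ≤ Q ω} (fun _ => (1 : ℝ)) | m] =ᵐ[μ] (fun _ => 1) ∧
  ∀ Q' : Ω → EReal, Measurable[m] Q' →
    μ[Set.indicator {ω | (X ω : EReal) ≤ Q' ω} (fun _ => (1 : ℝ)) | m] =ᵐ[μ] (fun _ => 1) →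
    ∀ᵐ ω ∂μ, Q ω ≤ Q' ω

/-- The invariant σ-field of the sequence `X`: generated by events of the form
`{ω | path X ω ∈ B}` for shift-invariant measurable sets `B` of sequences. -/
def invariantSigma {Ω : Type*} [MeasurableSpace Ω] (X : ℕ → Ω → ℝ) : MeasurableSpace Ω :=
  MeasurableSpace.generateFrom
    {A | ∃ B : Set (ℕ → ℝ), MeasurableSet B ∧ seqShift ⁻¹' B = B ∧ A = path X ⁻¹' B}
theorem stmt10 {Ω : Type*} (m : MeasurableSpace Ω) [m0 : MeasurableSpace Ω]
    (μ : Measure Ω) [IsProbabilityMeasure μ] (hm : m ≤ m0) (X : Ω → ℝ) (hX : Measurable X) :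
    ∃ Q : Ω → EReal, IsCondRightEndpoint μ m X Q := by
  classical
  set f : ℚ → Ω → ℝ := fun q => Set.indicator {ω | X ω ≤ (q : ℝ)} (fun _ => (1 : ℝ)) with hf
  have hsq : ∀ q : ℚ, MeasurableSet {ω | X ω ≤ (q : ℝ)} := fun q =>
    measurableSet_le hX measurable_const
  have hfint : ∀ q : ℚ, Integrable (f q) μ := fun q => (integrable_const (1 : ℝ)).indicator (hsq q)
  set g : ℚ → Ω → ℝ := fun q => μ[f q | m] with hg
  have hgm : ∀ q, Measurable[m] (g q) := fun q => stronglyMeasurable_condExp.measurable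
  set Q : Ω → EReal := fun ω => ⨅ q : ℚ, if 1 ≤ g q ω then ((q : ℝ) : EReal) else ⊤ with hQdef
  have hQm : Measurable[m] Q := by
    apply Measurable.iInf
    intro q
    exact Measurable.ite (measurableSet_le measurable_const (hgm q)) measurable_const
      measurable_const
  -- Key fact 1: a.e., if g q ω ≥ 1 then X ω ≤ q
  have key1 : ∀ q : ℚ, ∀ᵐ ω ∂μ, 1 ≤ g q ω → X ω ≤ (q : ℝ) := by
    intro q
    set A : Set Ω := {ω | 1 ≤ g q ω} with hA
    set s : Set Ω := {ω | X ω ≤ (q : ℝ)} with hs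
    have hAm : MeasurableSet[m] A := measurableSet_le measurable_const (hgm q)
    have hA0 : MeasurableSet A := hm _ hAm
    have h1 : ∫ ω in A, g q ω ∂μ = ∫ ω in A, f q ω ∂μ := setIntegral_condExp hm (hfint q) hAm
    have h2 : (μ A).toReal ≤ ∫ ω in A, g q ω ∂μ := by
      have : (μ A).toReal = ∫ _ω in A, (1 : ℝ) ∂μ := by simp; rfl
      rw [this]
      exact setIntegral_mono_on (integrable_const 1).integrableOn
        integrable_condExp.integrableOn hA0 (fun ω hω => hω)
    have h3 : ∫ ω in A, f q ω ∂μ = (μ (A ∩ s)).toReal := by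
      rw [hf]
      rw [setIntegral_indicator (hsq q)]
      simp; rfl
    have hle : μ A ≤ μ (A ∩ s) := by
      have h4 : (μ A).toReal ≤ (μ (A ∩ s)).toReal := by
        rw [← h3, ← h1]; exact h2
      exact (ENNReal.toReal_le_toReal (measure_ne_top μ _) (measure_ne_top μ _)).mp h4
    have hnull : μ (A \ s) = 0 := by
      have h5 : μ (A ∩ s) + μ (A \ s) = μ A := measure_inter_add_diff A (hsq q)
      have h6 : μ (A ∩ s) + μ (A \ s) ≤ μ (A ∩ s) + 0 := by
        rw [add_zero]; rw [h5]; exact hle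
      have := (ENNReal.add_le_add_iff_left (measure_ne_top μ _)).mp h6
      exact le_antisymm this zero_le
    have hset : {ω | ¬(1 ≤ g q ω → X ω ≤ (q : ℝ))} = A \ s := by
      ext ω
      simp [hA, hs, Set.mem_diff, Classical.not_imp]
    rw [ae_iff, hset]
    exact hnull
  -- a.e. X ≤ Q
  have hXQ : ∀ᵐ ω ∂μ, (X ω : EReal) ≤ Q ω := by
    have := (ae_all_iff).mpr key1
    filter_upwards [this] with ω hω
    refine le_iInf fun q => ?_
    by_cases h : 1 ≤ g q ω
    · rw [if_pos h]
      exact_mod_cast EReal.coe_le_coe_iff.mpr (hω q h)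
    · rw [if_neg h]; exact le_top
  -- Key fact 2
  have key2 : ∀ (Q' : Ω → EReal), Measurable[m] Q' → (∀ᵐ ω ∂μ, (X ω : EReal) ≤ Q' ω) →
      ∀ q : ℚ, ∀ᵐ ω ∂μ, Q' ω < ((q : ℝ) : EReal) → 1 ≤ g q ω := by
    intro Q' hQ'm hQ'ae q
    set B : Set Ω := {ω | Q' ω < ((q : ℝ) : EReal)} with hB
    have hBm : MeasurableSet[m] B := measurableSet_lt hQ'm measurable_const
    have h1 : B.indicator (f q) =ᵐ[μ] B.indicator (fun _ => (1 : ℝ)) := by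
      filter_upwards [hQ'ae] with ω hω
      by_cases hωB : ω ∈ B
      · rw [Set.indicator_of_mem hωB, Set.indicator_of_mem hωB]
        have hXq : X ω ≤ (q : ℝ) := by
          have : (X ω : EReal) < ((q : ℝ) : EReal) := lt_of_le_of_lt hω hωB
          exact le_of_lt (EReal.coe_lt_coe_iff.mp this)
        simp [hf, Set.indicator_apply, hXq]
      · rw [Set.indicator_of_notMem hωB, Set.indicator_of_notMem hωB]
    have h2 : B.indicator (g q) =ᵐ[μ] μ[B.indicator (f q) | m] :=
      (condExp_indicator (hfint q) hBm).symm
    have h3 : μ[B.indicator (f q) | m] =ᵐ[μ] μ[B.indicator (fun _ => (1 : ℝ)) | m] :=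
      condExp_congr_ae h1
    have h4 : μ[B.indicator (fun _ => (1 : ℝ)) | m] =ᵐ[μ] B.indicator (fun _ => (1 : ℝ)) :=
      Filter.EventuallyEq.of_eq (condExp_of_stronglyMeasurable hm
        ((stronglyMeasurable_const).indicator hBm)
        ((integrable_const (1 : ℝ)).indicator (hm _ hBm)))
    have h5 : B.indicator (g q) =ᵐ[μ] B.indicator (fun _ => (1 : ℝ)) :=
      (h2.trans h3).trans h4
    filter_upwards [h5] with ω hω hωB
    have hmem : ω ∈ B := hωB
    rw [Set.indicator_of_mem hmem, Set.indicator_of_mem hmem] at hω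
    rw [hω]
  refine ⟨Q, hQm, ?_, ?_⟩
  · -- conditional probability is one
    have hind : Set.indicator {ω | (X ω : EReal) ≤ Q ω} (fun _ => (1 : ℝ)) =ᵐ[μ]
        (fun _ => (1 : ℝ)) := by
      filter_upwards [hXQ] with ω hω
      have hmem : ω ∈ {ω | (X ω : EReal) ≤ Q ω} := hω
      exact Set.indicator_of_mem hmem _
    calc μ[Set.indicator {ω | (X ω : EReal) ≤ Q ω} (fun _ => (1 : ℝ)) | m]
        =ᵐ[μ] μ[(fun _ => (1 : ℝ)) | m] := condExp_congr_ae hind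
      _ =ᵐ[μ] (fun _ => (1 : ℝ)) := by rw [condExp_const hm]
  · -- minimality
    intro Q' hQ'm hQ'cond
    -- first derive X ≤ Q' a.e.
    have hA'meas : MeasurableSet {ω | (X ω : EReal) ≤ Q' ω} :=
      measurableSet_le (measurable_coe_real_ereal.comp hX) (hQ'm.mono hm le_rfl)
    have hA'int : Integrable (Set.indicator {ω | (X ω : EReal) ≤ Q' ω} (fun _ => (1 : ℝ))) μ :=
      (integrable_const (1 : ℝ)).indicator hA'meas
    have hint1 : ∫ ω, (μ[Set.indicator {ω | (X ω : EReal) ≤ Q' ω} (fun _ => (1 : ℝ)) | m]) ω ∂μ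
        = ∫ ω, Set.indicator {ω | (X ω : EReal) ≤ Q' ω} (fun _ => (1 : ℝ)) ω ∂μ :=
      integral_condExp hm
    have hint2 : ∫ ω, (μ[Set.indicator {ω | (X ω : EReal) ≤ Q' ω} (fun _ => (1 : ℝ)) | m]) ω ∂μ
        = 1 := by
      rw [integral_congr_ae hQ'cond]
      simp
    have hint3 : ∫ ω, Set.indicator {ω | (X ω : EReal) ≤ Q' ω} (fun _ => (1 : ℝ)) ω ∂μ
        = (μ {ω | (X ω : EReal) ≤ Q' ω}).toReal := by
      rw [integral_indicator_const (1 : ℝ) hA'meas]; simp; rfl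
    have hmeq : μ {ω | (X ω : EReal) ≤ Q' ω} = 1 := by
      have htr : (μ {ω | (X ω : EReal) ≤ Q' ω}).toReal = 1 := by
        rw [← hint3, ← hint1, hint2]
      have hne : μ {ω | (X ω : EReal) ≤ Q' ω} ≠ ⊤ := measure_ne_top μ _
      rw [← ENNReal.ofReal_toReal hne, htr]; simp
    have hQ'ae : ∀ᵐ ω ∂μ, (X ω : EReal) ≤ Q' ω := by
      rw [ae_iff]
      have : {ω | ¬ (X ω : EReal) ≤ Q' ω} = {ω | (X ω : EReal) ≤ Q' ω}ᶜ := by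
        ext ω; simp
      rw [this]
      exact (prob_compl_eq_zero_iff hA'meas).mpr hmeq
    have hall := (ae_all_iff).mpr (key2 Q' hQ'm hQ'ae)
    filter_upwards [hall] with ω hω
    by_contra hcon
    push_neg at hcon
    obtain ⟨q, hq1, hq2⟩ := EReal.exists_rat_btwn_of_lt hcon
    have hg1 : 1 ≤ g q ω := hω q hq1
    have : Q ω ≤ ((q : ℝ) : EReal) := by
      refine le_trans (iInf_le _ q) ?_
      rw [if_pos hg1]
    exact absurd (lt_of_le_of_lt this hq2) (lt_irrefl _)
end
end

section
/- Let X₁, X₂, … be a strictly stationary and ergodic sequence of real random variables whose essential supremum γ₁ is +∞, let (kₙ) be integers with 1 ≤ kₙ ≤ n, kₙ/n → 1, and a > 0. Set S(kₙ,n,a) = Σ_{i=1}^n X_i·1{X_{kₙ:n} − a < X_i < X_{kₙ:n}}. Then S(kₙ,n,a)/(n·X_{kₙ:n}) → 0 almost surely as n → ∞. -/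
open MeasureTheory Filter Set
open scoped Topology ENNReal

noncomputable section

namespace Stmt13Aux


lemma liminf_le_of_sub {u v : ℕ → ℝ}
    (hu0 : ∀ n, 0 ≤ u n) (hv0 : ∀ n, 0 ≤ v n) (hv1 : ∀ n, v n ≤ 1)
    (hd : Tendsto (fun n => u n - v n) atTop (𝓝 0)) :
    atTop.liminf u ≤ atTop.liminf v := by
  have hub : atTop.IsBoundedUnder (· ≥ ·) u := isBoundedUnder_of ⟨0, fun n => hu0 n⟩
  have hvb : atTop.IsBoundedUnder (· ≤ ·) v := isBoundedUnder_of ⟨1, fun n => hv1 n⟩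
  have hvlb : atTop.IsBoundedUnder (· ≥ ·) v := isBoundedUnder_of ⟨0, fun n => hv0 n⟩
  refine le_of_forall_pos_le_add fun ε hε => ?_
  have hev : ∀ᶠ n in atTop, u n ≤ v n + ε := by
    filter_upwards [hd.eventually (eventually_le_nhds hε)] with n hn
    nlinarith [hn]
  have hcb : atTop.IsCoboundedUnder (· ≥ ·) (fun n => v n + ε) :=
    IsBoundedUnder.isCoboundedUnder_ge (isBoundedUnder_of ⟨1 + ε, fun n => by nlinarith [hv1 n]⟩)
  calc atTop.liminf u ≤ atTop.liminf (fun n => v n + ε) := liminf_le_liminf hev hub hcb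
    _ = atTop.liminf v + ε := liminf_add_const atTop v ε hvb.isCoboundedUnder_ge hvlb

lemma tiling {α : Type*} (T : α → α) (f : α → ℝ)
    (h0 : ∀ y, 0 ≤ f y) (h1 : ∀ y, f y ≤ 1) (M : ℕ) (r : ℝ) (hr : 0 ≤ r)
    (H : ∀ y, ∃ n, 1 ≤ n ∧ n ≤ M ∧ birkhoffSum T f n y ≤ n * r) :
    ∀ L y, birkhoffSum T f L y ≤ L * r + M := by
  intro L
  induction L using Nat.strong_induction_on with
  | _ L ih =>
    intro y
    by_cases hL : L ≤ M
    · have h1' : birkhoffSum T f L y ≤ L :=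
        le_trans (Finset.sum_le_sum fun i _ => h1 _) (by simp)
      have : (L : ℝ) ≤ M := by exact_mod_cast hL
      nlinarith [mul_nonneg (Nat.cast_nonneg (α := ℝ) L) hr]
    · obtain ⟨n, hn1, hnM, hns⟩ := H y
      have hnL : n < L := lt_of_le_of_lt hnM (not_le.mp hL)
      have hsplit : birkhoffSum T f L y
          = birkhoffSum T f n y + birkhoffSum T f (L - n) (T^[n] y) := by
        rw [← birkhoffSum_add]; congr 1; omega
      have hrec := ih (L - n) (by omega) (T^[n] y)
      have hcast : ((L - n : ℕ) : ℝ) = (L : ℝ) - n := by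
        rw [Nat.cast_sub hnL.le]
      rw [hsplit]
      rw [hcast] at hrec
      nlinarith [hns, hrec]


lemma liminf_eq_of_sub {u v : ℕ → ℝ}
    (hu0 : ∀ n, 0 ≤ u n) (hu1 : ∀ n, u n ≤ 1)
    (hv0 : ∀ n, 0 ≤ v n) (hv1 : ∀ n, v n ≤ 1)
    (hd : Tendsto (fun n => u n - v n) atTop (𝓝 0)) :
    atTop.liminf u = atTop.liminf v :=
  le_antisymm (liminf_le_of_sub hu0 hv0 hv1 hd)
    (liminf_le_of_sub hv0 hu0 hu1 (by simpa using hd.neg))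

lemma birkhoffSum_nonneg {α : Type*} (T : α → α) {f : α → ℝ}
    (h : ∀ y, 0 ≤ f y) (n : ℕ) (y : α) : 0 ≤ birkhoffSum T f n y :=
  Finset.sum_nonneg fun _ _ => h _

lemma birkhoffSum_le_card {α : Type*} (T : α → α) {f : α → ℝ}
    (h : ∀ y, f y ≤ 1) (n : ℕ) (y : α) : birkhoffSum T f n y ≤ n := by
  calc birkhoffSum T f n y ≤ ∑ _i ∈ Finset.range n, (1 : ℝ) :=
        Finset.sum_le_sum fun _ _ => h _
    _ = n := by simp

lemma ergodic_liminf_freq {α : Type*} [MeasurableSpace α] {ν : Measure α}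
    [IsProbabilityMeasure ν] {T : α → α} (hT : Ergodic T ν)
    {A : Set α} (hA : MeasurableSet A) :
    ∀ᵐ y ∂ν, (ν A).toReal ≤
      atTop.liminf (fun n => birkhoffSum T (A.indicator (fun _ => (1:ℝ))) n y / n) := by
  set f : α → ℝ := A.indicator (fun _ => (1:ℝ)) with hf
  have hTm : Measurable T := hT.toMeasurePreserving.measurable
  have hf0 : ∀ y, 0 ≤ f y := fun y => Set.indicator_nonneg (fun _ _ => zero_le_one) y
  have hf1 : ∀ y, f y ≤ 1 := by
    intro y; by_cases h : y ∈ A <;> simp [hf, h]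
  have hfm : Measurable f := measurable_const.indicator hA
  have hSm : ∀ n, Measurable (fun y => birkhoffSum T f n y) := fun n =>
    Finset.measurable_sum _ fun i _ => hfm.comp (hTm.iterate i)
  set v : α → ℕ → ℝ := fun y n => birkhoffSum T f n y / n with hv
  have hv0 : ∀ y n, 0 ≤ v y n := fun y n =>
    div_nonneg (birkhoffSum_nonneg T hf0 n y) (Nat.cast_nonneg n)
  have hv1 : ∀ y n, v y n ≤ 1 := by
    intro y n
    rcases Nat.eq_zero_or_pos n with rfl | hn
    · simp [hv]
    · rw [hv]
      exact div_le_one (by exact_mod_cast hn) |>.2 (birkhoffSum_le_card T hf1 n y)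
  set g : α → ℝ := fun y => atTop.liminf (v y) with hg
  have hgm : Measurable g :=
    Measurable.liminf (fun n => (hSm n).div_const _)
  have hg0 : ∀ y, 0 ≤ g y := by
    intro y
    refine le_liminf_of_le ?_ (Eventually.of_forall fun n => hv0 y n)
    exact (isBoundedUnder_of ⟨1, fun n => hv1 y n⟩).isCoboundedUnder_ge
  -- invariance
  have hginv : ∀ y, g (T y) = g y := by
    intro y
    refine liminf_eq_of_sub (hv0 _) (hv1 _) (hv0 _) (hv1 _) ?_
    have hd : ∀ n : ℕ, v (T y) n - v y n = (f (T^[n] y) - f y) / n := by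
      intro n
      simp only [hv, ← sub_div, birkhoffSum_apply_sub_birkhoffSum]
    refine squeeze_zero_norm (a := fun n : ℕ => 1 / n) (fun n => ?_)
      tendsto_one_div_atTop_nhds_zero_nat
    rw [hd n, norm_div, Real.norm_natCast]
    rcases Nat.eq_zero_or_pos n with rfl | hn
    · simp
    · rw [div_le_div_iff_of_pos_right (by exact_mod_cast hn : (0:ℝ) < n)]
      rw [Real.norm_eq_abs]
      exact abs_le.2 ⟨by linarith [hf0 (T^[n] y), hf1 y], by linarith [hf1 (T^[n] y), hf0 y]⟩
  -- main claim
  have claim : ∀ s : ℝ, s < (ν A).toReal → ν {y | g y < s} = 0 := by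
    intro s hs
    set E : Set α := {y | g y < s} with hE
    have hEm : MeasurableSet E := measurableSet_lt hgm measurable_const
    have hEinv : T ⁻¹' E = E := by
      ext y
      simp only [hE, mem_preimage, mem_setOf_eq, hginv y]
    rcases hT.toPreErgodic.ae_empty_or_univ hEm hEinv with h | h
    · exact ae_eq_empty.1 h
    · -- E is conull: derive a contradiction
      exfalso
      have hEfull : ν E = 1 := by
        have := measure_congr h
        simpa using this
      have hs0 : 0 ≤ s := by
        have hne : E.Nonempty :=
          nonempty_of_measure_ne_zero (μ := ν) (by rw [hEfull]; exact one_ne_zero)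
        obtain ⟨y, hy⟩ := hne
        exact le_trans (hg0 y) (le_of_lt hy)
      set B : ℕ → Set α :=
        fun M => {y | ∀ n, 1 ≤ n → n ≤ M → (n : ℝ) * s < birkhoffSum T f n y} with hB
      have hBm : ∀ M, MeasurableSet (B M) := by
        intro M
        have : B M = ⋂ n, ⋂ (_ : 1 ≤ n), ⋂ (_ : n ≤ M),
            {y | (n : ℝ) * s < birkhoffSum T f n y} := by
          ext y; simp [hB, mem_iInter]
        rw [this]
        exact MeasurableSet.iInter fun n => MeasurableSet.iInter fun _ =>
          MeasurableSet.iInter fun _ => measurableSet_lt measurable_const (hSm n)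
      have hBanti : Antitone B := by
        intro M M' hMM' y hy n hn1 hn2
        exact hy n hn1 (hn2.trans hMM')
      have hBnull : ν (⋂ M, B M) = 0 := by
        have hsub : (⋂ M, B M) ⊆ Eᶜ := by
          intro y hy
          simp only [mem_iInter] at hy
          intro hyE
          have : s ≤ g y := by
            refine le_liminf_of_le
              ((isBoundedUnder_of ⟨1, fun n => hv1 y n⟩).isCoboundedUnder_ge) ?_
            filter_upwards [eventually_ge_atTop 1] with n hn
            have := hy n n hn le_rfl
            rw [hv]
            rw [le_div_iff₀ (by exact_mod_cast hn : (0:ℝ) < n)]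
            linarith [this]
          exact absurd hyE (not_lt.2 this)
        refine le_antisymm ?_ zero_le
        calc ν (⋂ M, B M) ≤ ν Eᶜ := measure_mono hsub
          _ = 0 := by
            rw [measure_compl hEm (measure_ne_top ν E), hEfull]
            simp
      -- the key inequality: (ν A).toReal ≤ s + ε for every ε > 0
      have key : ∀ ε : ℝ, 0 < ε → (ν A).toReal ≤ s + ε := by
        intro ε hε
        have htend : Tendsto (fun M => ν (B M)) atTop (𝓝 0) := by
          have := tendsto_measure_iInter_atTop (μ := ν)
            (fun M => (hBm M).nullMeasurableSet) hBanti ⟨0, measure_ne_top ν _⟩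
          rwa [hBnull] at this
        obtain ⟨M, hM⟩ := (htend.eventually
          (eventually_lt_nhds (ENNReal.ofReal_pos.2 hε))).exists
        set C : Set α := A ∩ (B M)ᶜ with hC
        have hCm : MeasurableSet C := hA.inter (hBm M).compl
        set ft : α → ℝ := C.indicator (fun _ => (1:ℝ)) with hft
        have hft0 : ∀ y, 0 ≤ ft y := fun y => Set.indicator_nonneg (fun _ _ => zero_le_one) y
        have hft1 : ∀ y, ft y ≤ 1 := by
          intro y; by_cases h : y ∈ C <;> simp [hft, h]
        have hftle : ∀ y, ft y ≤ f y := by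
          intro y
          by_cases h : y ∈ C
          · have : y ∈ A := h.1
            simp [hft, hf, h, this]
          · simp [hft, h, hf0 y]
        have Hhyp : ∀ y, ∃ n, 1 ≤ n ∧ n ≤ max M 1 ∧ birkhoffSum T ft n y ≤ n * s := by
          intro y
          by_cases hy : y ∈ B M
          · refine ⟨1, le_rfl, le_max_right _ _, ?_⟩
            have : ft y = 0 := by
              have : y ∉ C := fun hc => hc.2 hy
              simp [hft, this]
            simp [birkhoffSum_one, this, hs0]
          · rw [hB, mem_setOf_eq] at hy
            push_neg at hy
            obtain ⟨n, hn1, hnM, hns⟩ := hy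
            refine ⟨n, hn1, hnM.trans (le_max_left _ _), ?_⟩
            calc birkhoffSum T ft n y ≤ birkhoffSum T f n y :=
                  Finset.sum_le_sum fun i _ => hftle _
              _ ≤ n * s := hns
        have htile := tiling T ft hft0 hft1 (max M 1) s hs0 Hhyp
        -- integrate
        have hcomp : ∀ i : ℕ, (fun y => ft (T^[i] y)) = (T^[i] ⁻¹' C).indicator (1 : α → ℝ) := by
          intro i
          ext y
          by_cases h : T^[i] y ∈ C <;> simp [hft, h, Set.indicator_apply, mem_preimage]
        have hint : ∀ i : ℕ, Integrable (fun y => ft (T^[i] y)) ν := by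
          intro i
          rw [hcomp i]
          exact (integrable_const (1:ℝ)).indicator (((hTm.iterate i)) hCm)
        have hintegral : ∀ i : ℕ, ∫ y, ft (T^[i] y) ∂ν = (ν C).toReal := by
          intro i
          rw [hcomp i, MeasureTheory.integral_indicator_one ((hTm.iterate i) hCm)]
          exact congrArg ENNReal.toReal ((hT.toMeasurePreserving.iterate i).measure_preimage hCm.nullMeasurableSet)
        have hSL : ∀ L : ℕ, (L : ℝ) * (ν C).toReal ≤ L * s + (max M 1 : ℕ) := by
          intro L
          have heq : (fun y => birkhoffSum T ft L y)
              = fun y => ∑ i ∈ Finset.range L, ft (T^[i] y) := rfl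
          have h1 : ∫ y, birkhoffSum T ft L y ∂ν = L * (ν C).toReal := by
            rw [heq, integral_finset_sum _ (fun i _ => hint i)]
            simp [hintegral, mul_comm]
          have hSint : Integrable (fun y => birkhoffSum T ft L y) ν := by
            rw [heq]; exact integrable_finset_sum _ (fun i _ => hint i)
          have h2 : ∫ y, birkhoffSum T ft L y ∂ν ≤ L * s + (max M 1 : ℕ) := by
            calc ∫ y, birkhoffSum T ft L y ∂ν ≤ ∫ _y, ((L : ℝ) * s + (max M 1 : ℕ) : ℝ) ∂ν :=
                  integral_mono hSint (integrable_const _) (fun y => htile L y)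
              _ = (L : ℝ) * s + (max M 1 : ℕ) := by simp
          rw [h1] at h2
          exact h2
        have hCs : (ν C).toReal ≤ s := by
          by_contra hlt
          push_neg at hlt
          obtain ⟨L, hL⟩ := exists_nat_gt (((max M 1 : ℕ) : ℝ) / ((ν C).toReal - s))
          have hpos : 0 < (ν C).toReal - s := by linarith
          have h3 := hSL L
          rw [div_lt_iff₀ hpos] at hL
          nlinarith
        have hle : ν A ≤ ν C + ν (B M) := by
          calc ν A ≤ ν (C ∪ B M) := by
                refine measure_mono fun y hy => ?_
                by_cases h : y ∈ B M
                · exact Or.inr h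
                · exact Or.inl ⟨hy, h⟩
            _ ≤ ν C + ν (B M) := measure_union_le _ _
        have hBreal : (ν (B M)).toReal ≤ ε := le_of_lt (ENNReal.toReal_lt_of_lt_ofReal hM)
        calc (ν A).toReal ≤ (ν C + ν (B M)).toReal :=
              ENNReal.toReal_mono
                (ENNReal.add_ne_top.2 ⟨measure_ne_top _ _, measure_ne_top _ _⟩) hle
          _ = (ν C).toReal + (ν (B M)).toReal :=
              ENNReal.toReal_add (measure_ne_top _ _) (measure_ne_top _ _)
          _ ≤ s + ε := add_le_add hCs hBreal
      exact absurd (le_of_forall_pos_le_add key) (not_le.2 hs)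
  have hq : ∀ᵐ y ∂ν, ∀ q : ℚ, (q : ℝ) < (ν A).toReal → ¬ (g y < q) := by
    rw [ae_all_iff]
    intro q
    by_cases hql : (q : ℝ) < (ν A).toReal
    · have h0 := claim q hql
      rw [ae_iff]
      refine measure_mono_null (fun y hy => ?_) h0
      simp only [mem_setOf_eq] at hy ⊢
      push_neg at hy
      exact hy.2
    · exact Eventually.of_forall fun y hlt => absurd hlt hql
  filter_upwards [hq] with y hy
  by_contra hgy
  push_neg at hgy
  obtain ⟨q, hq1, hq2⟩ := exists_rat_btwn hgy
  exact hy q hq2 hq1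

/-! ### Transfer to path space -/

lemma seqShift_iterate (y : ℕ → ℝ) (i n : ℕ) : (seqShift^[i] y) n = y (n + i) := by
  induction i generalizing y n with
  | zero => simp
  | succ i ih =>
    rw [Function.iterate_succ_apply, ih]
    rfl

lemma birkhoffSum_indicator_gt (m : ℝ) (n : ℕ) (y : ℕ → ℝ) :
    birkhoffSum seqShift ({z : ℕ → ℝ | m < z 0}.indicator (fun _ => (1:ℝ))) n y
      = (((Finset.range n).filter (fun i => m < y i)).card : ℝ) := by
  have hbs : birkhoffSum seqShift ({z : ℕ → ℝ | m < z 0}.indicator (fun _ => (1:ℝ))) n y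
      = ∑ i ∈ Finset.range n,
        ({z : ℕ → ℝ | m < z 0}.indicator (fun _ => (1:ℝ))) (seqShift^[i] y) := rfl
  rw [hbs, Finset.card_filter]
  push_cast
  refine Finset.sum_congr rfl fun i _ => ?_
  have h0 : (seqShift^[i] y) 0 = y i := by rw [seqShift_iterate]; simp
  by_cases h : m < y i <;> simp [Set.indicator_apply, h0, h]

lemma birkhoffSum_indicator_le (m : ℝ) (n : ℕ) (y : ℕ → ℝ) :
    birkhoffSum seqShift ({z : ℕ → ℝ | z 0 ≤ m}.indicator (fun _ => (1:ℝ))) n y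
      = (((Finset.range n).filter (fun i => y i ≤ m)).card : ℝ) := by
  have hbs : birkhoffSum seqShift ({z : ℕ → ℝ | z 0 ≤ m}.indicator (fun _ => (1:ℝ))) n y
      = ∑ i ∈ Finset.range n,
        ({z : ℕ → ℝ | z 0 ≤ m}.indicator (fun _ => (1:ℝ))) (seqShift^[i] y) := rfl
  rw [hbs, Finset.card_filter]
  push_cast
  refine Finset.sum_congr rfl fun i _ => ?_
  have h0 : (seqShift^[i] y) 0 = y i := by rw [seqShift_iterate]; simp
  by_cases h : y i ≤ m <;> simp [Set.indicator_apply, h0, h]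

lemma count_div_nonneg (c n : ℕ) : 0 ≤ (c : ℝ) / n :=
  div_nonneg (Nat.cast_nonneg c) (Nat.cast_nonneg n)

lemma count_div_le_one {c n : ℕ} (hc : c ≤ n) : (c : ℝ) / n ≤ 1 := by
  rcases Nat.eq_zero_or_pos n with rfl | hn
  · simp [Nat.le_zero.1 hc]
  · exact (div_le_one (by exact_mod_cast hn)).2 (by exact_mod_cast hc)

/-- Almost surely, the empirical frequency of exceeding level `m` converges to
the probability of exceeding `m`. -/
lemma freq_tendsto {Ω : Type*} [MeasurableSpace Ω] (μ : Measure Ω) [IsProbabilityMeasure μ]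
    (X : ℕ → Ω → ℝ) (hX : ∀ n, Measurable (X n))
    (herg : Ergodic seqShift (Measure.map (path X) μ)) (m : ℝ) :
    ∀ᵐ ω ∂μ, Tendsto
      (fun n => (((Finset.range n).filter (fun i => m < path X ω i)).card : ℝ) / n)
      atTop (𝓝 (μ {ω | m < X 0 ω}).toReal) := by
  set ν := Measure.map (path X) μ with hν
  have hpm : Measurable (path X) := measurable_pi_lambda _ hX
  haveI : IsProbabilityMeasure ν := Measure.isProbabilityMeasure_map hpm.aemeasurable
  set A : Set (ℕ → ℝ) := {z | m < z 0} with hA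
  set A' : Set (ℕ → ℝ) := {z | z 0 ≤ m} with hA'
  have hAm : MeasurableSet A := measurableSet_lt measurable_const (measurable_pi_apply 0)
  have hA'm : MeasurableSet A' := measurableSet_le (measurable_pi_apply 0) measurable_const
  have hcompl : A' = Aᶜ := by
    ext z; simp [hA, hA', not_lt]
  have hνA : ν A = μ {ω | m < X 0 ω} := by
    rw [hν, Measure.map_apply hpm hAm]; rfl
  have hsum : (ν A).toReal + (ν A').toReal = 1 := by
    have h1 : ν A + ν A' = 1 := by
      rw [hcompl, measure_add_measure_compl hAm, measure_univ]
    have h2 := (ENNReal.toReal_add (measure_ne_top ν A) (measure_ne_top ν A')).symm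
    rw [h1] at h2
    simpa using h2
  have haeν := (ergodic_liminf_freq herg hAm).and (ergodic_liminf_freq herg hA'm)
  have hae := ae_of_ae_map hpm.aemeasurable haeν
  filter_upwards [hae] with ω hω
  obtain ⟨hl1, hl2⟩ := hω
  rw [hA] at hl1
  rw [hA'] at hl2
  simp only [birkhoffSum_indicator_gt] at hl1
  simp only [birkhoffSum_indicator_le] at hl2
  set u : ℕ → ℝ :=
    fun n => (((Finset.range n).filter (fun i => m < path X ω i)).card : ℝ) / n with hu
  set w : ℕ → ℝ :=
    fun n => (((Finset.range n).filter (fun i => path X ω i ≤ m)).card : ℝ) / n with hw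
  have hub0 : ∀ n, 0 ≤ u n := fun n => count_div_nonneg _ _
  have hwb0 : ∀ n, 0 ≤ w n := fun n => count_div_nonneg _ _
  have hub1 : ∀ n, u n ≤ 1 := fun n =>
    count_div_le_one ((Finset.card_filter_le _ _).trans_eq (Finset.card_range n))
  have hwb1 : ∀ n, w n ≤ 1 := fun n =>
    count_div_le_one ((Finset.card_filter_le _ _).trans_eq (Finset.card_range n))
  have hcard : ∀ n : ℕ, ((Finset.range n).filter (fun i => m < path X ω i)).card
      + ((Finset.range n).filter (fun i => path X ω i ≤ m)).card = n := by
    intro n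
    have h := Finset.card_filter_add_card_filter_not
      (s := Finset.range n) (p := fun i => m < path X ω i)
    simp only [not_lt, Finset.card_range] at h
    exact h
  have heq : ∀ᶠ n in atTop, u n = 1 - w n := by
    filter_upwards [eventually_ge_atTop 1] with n hn
    have hne : (n : ℝ) ≠ 0 := Nat.cast_ne_zero.2 (by omega)
    have hc : (((Finset.range n).filter (fun i => m < path X ω i)).card : ℝ)
        + (((Finset.range n).filter (fun i => path X ω i ≤ m)).card : ℝ) = n := by
      exact_mod_cast hcard n
    rw [hu, hw]
    field_simp
    linarith
  have hlimsup : atTop.limsup u ≤ (ν A).toReal := by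
    have h1 : atTop.limsup u = atTop.limsup (fun n => 1 - w n) := limsup_congr heq
    have h2 : atTop.limsup (fun n => 1 - w n) = 1 - atTop.liminf w :=
      limsup_const_sub atTop w 1
        ((isBoundedUnder_of ⟨1, fun n => hwb1 n⟩).isCoboundedUnder_ge)
        (isBoundedUnder_of ⟨0, fun n => hwb0 n⟩)
    rw [h1, h2]
    linarith
  rw [← hνA]
  exact tendsto_of_le_liminf_of_limsup_le hl1 hlimsup
    (isBoundedUnder_of ⟨1, fun n => hub1 n⟩)
    (isBoundedUnder_of ⟨0, fun n => hub0 n⟩)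

/-! ### Order statistic lemmas -/

lemma countP_ofFn_eq (p : ℝ → Prop) [DecidablePred p] (x : ℕ → ℝ) (n : ℕ) :
    (List.ofFn (fun i : Fin n => x i)).countP (fun z => decide (p z))
      = ((Finset.range n).filter (fun i => p (x i))).card := by
  induction n with
  | zero => simp
  | succ n ih =>
    rw [List.ofFn_succ', Finset.range_add_one, Finset.filter_insert]
    by_cases h : p (x n)
    · rw [if_pos h, Finset.card_insert_of_notMem (by simp)]
      simp [List.concat_eq_append, List.countP_append, ih, h]
    · rw [if_neg h]
      simp [List.concat_eq_append, List.countP_append, ih, h]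

lemma lt_ordStat {k n : ℕ} {x : ℕ → ℝ} {M : ℝ} (hk1 : 1 ≤ k) (hkn : k ≤ n)
    (h : ((Finset.range n).filter (fun i => x i ≤ M)).card ≤ k - 1) :
    M < ordStat k n x := by
  set l := (List.ofFn (fun i : Fin n => x i)).insertionSort (· ≤ ·) with hl
  have hlen : l.length = n := by
    rw [hl, List.length_insertionSort, List.length_ofFn]
  have hsort : l.Pairwise (· ≤ ·) := List.pairwise_insertionSort _ _
  have hidx : k - 1 < l.length := by omega
  have hget : ordStat k n x = l[k-1] := List.getD_eq_getElem l 0 hidx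
  by_contra hle
  push_neg at hle
  rw [hget] at hle
  have htake : ∀ z ∈ l.take k, z ≤ M := by
    intro z hz
    obtain ⟨j, hj, hzj⟩ := List.mem_iff_getElem.1 hz
    rw [List.length_take] at hj
    have hjk : j < k := lt_of_lt_of_le hj (min_le_left _ _)
    have hjl : j < l.length := by omega
    rw [List.getElem_take] at hzj
    have hrel : l[j] ≤ l[k-1] := by
      have := hsort.rel_get_of_le (a := ⟨j, hjl⟩) (b := ⟨k-1, hidx⟩) (by simp; omega)
      simpa [List.get_eq_getElem] using this
    rw [← hzj]
    exact le_trans hrel hle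
  have hcount : k ≤ l.countP (fun z => decide (z ≤ M)) := by
    have h1 : (l.take k).countP (fun z => decide (z ≤ M)) = (l.take k).length :=
      List.countP_eq_length.2 fun z hz => decide_eq_true (htake z hz)
    have h2 : (l.take k).length = k := by
      rw [List.length_take]; omega
    calc k = (l.take k).countP (fun z => decide (z ≤ M)) := by rw [h1, h2]
      _ ≤ l.countP (fun z => decide (z ≤ M)) := (l.take_sublist k).countP_le
  have hperm : l.countP (fun z => decide (z ≤ M))
      = ((Finset.range n).filter (fun i => x i ≤ M)).card := by
    rw [(List.perm_insertionSort (· ≤ ·) _).countP_eq]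
    exact countP_ofFn_eq (fun z => z ≤ M) x n
  omega

lemma nearCount_le {k n : ℕ} {a M : ℝ} {x : ℕ → ℝ} (h : M + a ≤ ordStat k n x) :
    nearCount k n a x ≤ ((Finset.range n).filter (fun i => M < x i)).card := by
  apply Finset.card_le_card
  intro i hi
  simp only [Finset.mem_filter] at hi ⊢
  exact ⟨hi.1, by linarith [hi.2.1]⟩

lemma nearSum_nonneg {k n : ℕ} {a : ℝ} {x : ℕ → ℝ} (h : a ≤ ordStat k n x) :
    0 ≤ nearSum k n a x := by
  refine Finset.sum_nonneg fun i _ => ?_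
  by_cases hc : ordStat k n x - a < x i ∧ x i < ordStat k n x
  · rw [if_pos hc]; linarith [hc.1]
  · rw [if_neg hc]

lemma nearSum_le {k n : ℕ} {a : ℝ} {x : ℕ → ℝ} :
    nearSum k n a x ≤ (nearCount k n a x : ℝ) * ordStat k n x := by
  rw [nearSum, nearCount, Finset.card_filter]
  push_cast
  rw [Finset.sum_mul]
  refine Finset.sum_le_sum fun i _ => ?_
  by_cases hc : ordStat k n x - a < x i ∧ x i < ordStat k n x
  · rw [if_pos hc, if_pos hc, one_mul]; exact le_of_lt hc.2
  · rw [if_neg hc, if_neg hc, zero_mul]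

end Stmt13Aux

theorem stmt13 {Ω : Type*} [MeasurableSpace Ω] (μ : Measure Ω) [IsProbabilityMeasure μ]
    (X : ℕ → Ω → ℝ) (hX : ∀ n, Measurable (X n))
    (herg : Ergodic seqShift (Measure.map (path X) μ))
    (hsup : rightEndpoint μ (X 0) = ⊤)
    (a : ℝ) (ha : 0 < a)
    (k : ℕ → ℕ) (hk : ∀ n, 1 ≤ n → 1 ≤ k n ∧ k n ≤ n)
    (hk1 : Tendsto (fun n => (k n : ℝ) / n) atTop (𝓝 1)) :
    ∀ᵐ ω ∂μ, Tendsto (fun n =>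
      nearSum (k n) n a (path X ω) / (n * ordStat (k n) n (path X ω))) atTop (𝓝 0) := by
  classical
  -- positivity of tail probabilities
  have hmeas_le : ∀ r : ℝ, MeasurableSet {ω | X 0 ω ≤ r} := fun r =>
    measurableSet_le (hX 0) measurable_const
  have hlt1 : ∀ r : ℝ, μ {ω | X 0 ω ≤ r} < 1 := by
    intro r
    by_contra hge
    push_neg at hge
    have hsub : {r' : ℝ | μ {ω | X 0 ω ≤ r'} < 1} ⊆ Iio r := by
      intro r' hr'
      by_contra hrr
      rw [mem_Iio, not_lt] at hrr
      have hmono : μ {ω | X 0 ω ≤ r} ≤ μ {ω | X 0 ω ≤ r'} := by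
        refine measure_mono fun ω h => ?_
        simp only [mem_setOf_eq] at h ⊢
        exact le_trans h hrr
      rw [mem_setOf_eq] at hr'
      exact absurd (lt_of_le_of_lt (le_trans hge hmono) hr') (lt_irrefl _)
    have hsup_le : rightEndpoint μ (X 0) ≤ (r : EReal) := by
      rw [rightEndpoint]
      apply sSup_le
      rintro e ⟨r', hr', rfl⟩
      show (r' : EReal) ≤ (r : EReal)
      exact_mod_cast le_of_lt (hsub hr')
    rw [hsup] at hsup_le
    simp at hsup_le
  have hpos : ∀ m : ℕ, 0 < μ {ω | (m : ℝ) < X 0 ω} := by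
    intro m
    have hc : {ω | (m : ℝ) < X 0 ω} = {ω | X 0 ω ≤ (m : ℝ)}ᶜ := by
      ext ω; simp [not_le]
    rw [hc, measure_compl (hmeas_le m) (measure_ne_top μ _), measure_univ]
    exact tsub_pos_iff_lt.2 (hlt1 m)
  set p : ℕ → ℝ := fun m => (μ {ω | (m : ℝ) < X 0 ω}).toReal with hp
  have hppos : ∀ m : ℕ, 0 < p m := fun m =>
    ENNReal.toReal_pos (hpos m).ne' (measure_ne_top _ _)
  have hμ0 : Tendsto (fun m : ℕ => μ {ω | (m : ℝ) < X 0 ω}) atTop (𝓝 0) := by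
    have hanti : Antitone (fun m : ℕ => {ω | (m : ℝ) < X 0 ω}) := by
      intro m m' hmm' ω hω
      simp only [mem_setOf_eq] at hω ⊢
      exact lt_of_le_of_lt (by exact_mod_cast hmm') hω
    have h := tendsto_measure_iInter_atTop (μ := μ)
      (fun m : ℕ => (measurableSet_lt measurable_const (hX 0)).nullMeasurableSet)
      hanti ⟨0, measure_ne_top μ _⟩
    have hempty : (⋂ m : ℕ, {ω | (m : ℝ) < X 0 ω}) = ∅ := by
      ext ω
      simp only [mem_iInter, mem_setOf_eq, mem_empty_iff_false, iff_false, not_forall, not_lt]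
      obtain ⟨m, hm⟩ := exists_nat_gt (X 0 ω)
      exact ⟨m, le_of_lt hm⟩
    rw [hempty, measure_empty] at h
    exact h
  -- the good event
  filter_upwards [ae_all_iff.2 fun m : ℕ => Stmt13Aux.freq_tendsto μ X hX herg (m : ℝ)]
    with ω hfreq
  set y : ℕ → ℝ := path X ω with hy
  set c : ℕ → ℕ → ℕ :=
    fun m n => ((Finset.range n).filter (fun i => (m : ℝ) < y i)).card with hc
  have hfreq' : ∀ m : ℕ, Tendsto (fun n => (c m n : ℝ) / n) atTop (𝓝 (p m)) := fun m => hfreq m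
  -- the order statistic tends to infinity
  have hord : ∀ M : ℝ, ∀ᶠ n in atTop, M < ordStat (k n) n y := by
    intro M
    obtain ⟨m, hmM⟩ := exists_nat_gt M
    have hev1 : ∀ᶠ n in atTop, p m / 2 < (c m n : ℝ) / n :=
      (hfreq' m).eventually (eventually_gt_nhds (by linarith [hppos m]))
    have hev2 : ∀ᶠ n in atTop, 1 - p m / 4 < (k n : ℝ) / n :=
      hk1.eventually (eventually_gt_nhds (by linarith [hppos m]))
    have hev3 : ∀ᶠ n : ℕ in atTop, (4 : ℝ) / p m ≤ (n : ℝ) :=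
      tendsto_natCast_atTop_atTop.eventually_ge_atTop _
    filter_upwards [hev1, hev2, hev3, eventually_ge_atTop 1] with n h1 h2 h3 hn1
    have hnpos : (0 : ℝ) < n := by exact_mod_cast hn1
    have hkb := hk n hn1
    -- real inequality : (n : ℝ) + 1 ≤ c m n + k n
    have hcineq : p m / 2 * n < c m n := by
      rw [lt_div_iff₀ hnpos] at h1
      linarith
    have hkineq : (1 - p m / 4) * n < k n := by
      rw [lt_div_iff₀ hnpos] at h2
      linarith
    have hn4 : 1 ≤ p m / 4 * n := by
      rw [div_mul_eq_mul_div, le_div_iff₀ (by norm_num : (0:ℝ) < 4)]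
      rw [div_le_iff₀ (hppos m)] at h3
      linarith
    have hreal : (n : ℝ) + 1 ≤ (c m n : ℝ) + (k n : ℝ) := by nlinarith
    have hnat : n + 1 ≤ c m n + k n := by exact_mod_cast hreal
    have hcards : ((Finset.range n).filter (fun i => (m : ℝ) < y i)).card
        + ((Finset.range n).filter (fun i => y i ≤ (m : ℝ))).card = n := by
      have h := Finset.card_filter_add_card_filter_not
        (s := Finset.range n) (p := fun i => (m : ℝ) < y i)
      simp only [not_lt, Finset.card_range] at h
      exact h
    have hnat' : n + 1 ≤ ((Finset.range n).filter (fun i => (m : ℝ) < y i)).card + k n := hnat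
    have hle : ((Finset.range n).filter (fun i => y i ≤ (m : ℝ))).card ≤ k n - 1 := by
      omega
    have := Stmt13Aux.lt_ordStat hkb.1 hkb.2 hle
    exact lt_trans hmM this
  -- nearCount / n tends to zero
  have hG : Tendsto (fun n => (nearCount (k n) n a y : ℝ) / n) atTop (𝓝 0) := by
    rw [tendsto_order]
    constructor
    · intro b hb
      exact Eventually.of_forall fun n =>
        lt_of_lt_of_le hb (Stmt13Aux.count_div_nonneg _ _)
    · intro b hb
      obtain ⟨m, hm⟩ := (hμ0.eventually
        (eventually_lt_nhds (ENNReal.ofReal_pos.2 (by linarith : (0:ℝ) < b / 2)))).exists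
      have hpmb : p m < b / 2 := ENNReal.toReal_lt_of_lt_ofReal hm
      have hev1 : ∀ᶠ n in atTop, (m : ℝ) + a < ordStat (k n) n y := hord ((m : ℝ) + a)
      have hev2 : ∀ᶠ n in atTop, (c m n : ℝ) / n < b :=
        (hfreq' m).eventually (eventually_lt_nhds (by linarith))
      filter_upwards [hev1, hev2, eventually_ge_atTop 1] with n h1 h2 hn1
      have hnpos : (0 : ℝ) < n := by exact_mod_cast hn1
      have hnc : nearCount (k n) n a y ≤ c m n :=
        Stmt13Aux.nearCount_le (le_of_lt h1)
      calc (nearCount (k n) n a y : ℝ) / n ≤ (c m n : ℝ) / n := by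
            rw [div_le_div_iff_of_pos_right hnpos]
            exact_mod_cast hnc
        _ < b := h2
  -- squeeze
  have hev_pos : ∀ᶠ n in atTop, (0:ℝ) < ordStat (k n) n y ∧ a ≤ ordStat (k n) n y := by
    filter_upwards [hord (max a 1)] with n hn
    constructor
    · exact lt_of_lt_of_le (by norm_num) (le_trans (le_max_right a 1) (le_of_lt hn))
    · exact le_trans (le_max_left a 1) (le_of_lt hn)
  have hev0 : ∀ᶠ n in atTop,
      (0:ℝ) ≤ nearSum (k n) n a y / (n * ordStat (k n) n y) := by
    filter_upwards [hev_pos] with n hn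
    exact div_nonneg (Stmt13Aux.nearSum_nonneg hn.2)
      (mul_nonneg (Nat.cast_nonneg n) (le_of_lt hn.1))
  have hev2 : ∀ᶠ n in atTop,
      nearSum (k n) n a y / (n * ordStat (k n) n y)
        ≤ (nearCount (k n) n a y : ℝ) / n := by
    filter_upwards [hev_pos, eventually_ge_atTop 1] with n hn hn1
    have hnpos : (0 : ℝ) < n := by exact_mod_cast hn1
    have hdpos : (0 : ℝ) < n * ordStat (k n) n y := mul_pos hnpos hn.1
    calc nearSum (k n) n a y / (n * ordStat (k n) n y)
        ≤ ((nearCount (k n) n a y : ℝ) * ordStat (k n) n y) / (n * ordStat (k n) n y) := by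
          rw [div_le_div_iff_of_pos_right hdpos]
          exact Stmt13Aux.nearSum_le
      _ = (nearCount (k n) n a y : ℝ) / n := by
          rw [mul_comm (n : ℝ) (ordStat (k n) n y)]
          rw [mul_comm (nearCount (k n) n a y : ℝ) (ordStat (k n) n y)]
          exact mul_div_mul_left _ _ (ne_of_gt hn.1)
  exact tendsto_of_tendsto_of_tendsto_of_le_of_le' tendsto_const_nhds hG hev0 hev2
end
end
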